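/- arXiv:1911.12289 — 7 statements merged into one kernel-verified Lean document; each statement's English description precedes it below -/
import Mathlib

section
/- ∫_{ℝ³} x₂² / (‖x‖³ · ‖x − e₃‖³) dx = 2π, where e₃ = (0,0,1) and x₂ denotes the second coordinate of x. -/
open MeasureTheory Real
open scoped RealInnerProductSpace

noncomputable section

/-- The cross product on `EuclideanSpace ℝ (Fin 3)`. -/
def cross (u v : EuclideanSpace ℝ (Fin 3)) : EuclideanSpace ℝ (Fin 3) :=
  (WithLp.equiv 2 (Fin 3 → ℝ)).symm
    ![u 1 * v 2 - u 2 * v 1, u 2 * v 0 - u 0 * v 2, u 0 * v 1 - u 1 * v 0]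

/-- The third standard basis vector `e₃ = (0,0,1)`. -/
def e3 : EuclideanSpace ℝ (Fin 3) := (WithLp.equiv 2 (Fin 3 → ℝ)).symm ![0, 0, 1]

open Set Filter Topology

section Helpers

/-- Change of variables to polar coordinates, Lebesgue integral version. -/
theorem my_lintegral_comp_polarCoord_symm (f : ℝ × ℝ → ENNReal) :
    (∫⁻ p in polarCoord.target, ENNReal.ofReal p.1 * f (polarCoord.symm p)) = ∫⁻ p, f p := by
  set B : ℝ × ℝ → ℝ × ℝ →L[ℝ] ℝ × ℝ := fun p =>
    LinearMap.toContinuousLinearMap (Matrix.toLin (Module.Basis.finTwoProd ℝ) (Module.Basis.finTwoProd ℝ)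
      !![Real.cos p.2, -p.1 * Real.sin p.2; Real.sin p.2, p.1 * Real.cos p.2])
  have A : ∀ p ∈ polarCoord.target, HasFDerivWithinAt polarCoord.symm (B p) polarCoord.target p :=
    fun p _ => (hasFDerivAt_polarCoord_symm p).hasFDerivWithinAt
  have B_det : ∀ p, (B p).det = p.1 := by
    intro p
    conv_rhs => rw [← one_mul p.1, ← cos_sq_add_sin_sq p.2]
    simp only [B, neg_mul, LinearMap.det_toContinuousLinearMap, LinearMap.det_toLin,
      Matrix.det_fin_two_of, sub_neg_eq_add]
    ring
  symm
  calc
    ∫⁻ p, f p = ∫⁻ p in polarCoord.source, f p := by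
      rw [← setLIntegral_univ]
      exact setLIntegral_congr polarCoord_source_ae_eq_univ.symm
    _ = ∫⁻ p in polarCoord.symm '' polarCoord.target, f p := by
      rw [polarCoord.symm_image_target_eq_source]
    _ = ∫⁻ p in polarCoord.target, ENNReal.ofReal |(B p).det| * f (polarCoord.symm p) := by
      apply lintegral_image_eq_lintegral_abs_det_fderiv_mul volume
        polarCoord.open_target.measurableSet A
      exact polarCoord.symm.injOn
    _ = ∫⁻ p in polarCoord.target, ENNReal.ofReal p.1 * f (polarCoord.symm p) := by
      refine setLIntegral_congr_fun polarCoord.open_target.measurableSet ?_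
      intro p hp
      dsimp only
      rw [B_det, abs_of_pos hp.1]

theorem my_alg_aux (a b ρ s t : ℝ) (hab2 : a^2-b^2 ≠ 0) (hs0 : 0 < s) (ht0 : 0 < t)
    (hs2 : s^2 = ρ^2+a^2) (ht2 : t^2 = ρ^2+b^2) :
    ρ^3/(s^3*t^3) =
      ((a^2+b^2)*(2*ρ)*((a^2-b^2)^2*(s*t)) -
        ((a^2+b^2)*ρ^2+2*a^2*b^2)*((a^2-b^2)^2*(1/(2*s)*(2*ρ)*t + s*(1/(2*t)*(2*ρ)))))
        /((a^2-b^2)^2*(s*t))^2 := by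
  field_simp
  linear_combination (-ρ*(2*(a^2+b^2)*t^2 - (ρ^2*(a^2+b^2)+a^2*b^2*2))) * hs2 + (-ρ*(2*(a^2+b^2)*(ρ^2+a^2) - (ρ^2*(a^2+b^2)+a^2*b^2*2))) * ht2

theorem my_radial_aux {a b : ℝ} (ha : 0 < a) (hb : 0 < b) (hab : a ≠ b) :
    IntegrableOn (fun ρ => ρ^3 / (Real.sqrt (ρ^2+a^2)^3 * Real.sqrt (ρ^2+b^2)^3)) (Ioi 0) ∧
    ∫ ρ in Ioi (0:ℝ), ρ^3 / (Real.sqrt (ρ^2+a^2)^3 * Real.sqrt (ρ^2+b^2)^3) = 1/(a+b)^2 := by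
  have hab2 : a^2 - b^2 ≠ 0 := by
    intro h
    exact hab (by nlinarith)
  set G : ℝ → ℝ := fun ρ =>
    ((a^2+b^2)*ρ^2 + 2*a^2*b^2) / ((a^2-b^2)^2 * (Real.sqrt (ρ^2+a^2) * Real.sqrt (ρ^2+b^2)))
    with hGdef
  have key : ∀ ρ : ℝ, HasDerivAt G
      (ρ^3 / (Real.sqrt (ρ^2+a^2)^3 * Real.sqrt (ρ^2+b^2)^3)) ρ := by
    intro ρ
    have hpa : (0:ℝ) < ρ^2 + a^2 := by positivity
    have hpb : (0:ℝ) < ρ^2 + b^2 := by positivity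
    have hs0 : 0 < Real.sqrt (ρ^2+a^2) := Real.sqrt_pos.2 hpa
    have ht0 : 0 < Real.sqrt (ρ^2+b^2) := Real.sqrt_pos.2 hpb
    have hs2 : Real.sqrt (ρ^2+a^2)^2 = ρ^2+a^2 := Real.sq_sqrt hpa.le
    have ht2 : Real.sqrt (ρ^2+b^2)^2 = ρ^2+b^2 := Real.sq_sqrt hpb.le
    have hds : HasDerivAt (fun x : ℝ => Real.sqrt (x^2+a^2))
        (1/(2*Real.sqrt (ρ^2+a^2)) * (2*ρ)) ρ := by
      have h1 : HasDerivAt (fun x : ℝ => x^2+a^2) (2*ρ) ρ := by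
        simpa using (hasDerivAt_pow 2 ρ).add_const (a^2)
      simpa [Function.comp_def] using (Real.hasDerivAt_sqrt hpa.ne').comp ρ h1
    have hdt : HasDerivAt (fun x : ℝ => Real.sqrt (x^2+b^2))
        (1/(2*Real.sqrt (ρ^2+b^2)) * (2*ρ)) ρ := by
      have h1 : HasDerivAt (fun x : ℝ => x^2+b^2) (2*ρ) ρ := by
        simpa using (hasDerivAt_pow 2 ρ).add_const (b^2)
      simpa [Function.comp_def] using (Real.hasDerivAt_sqrt hpb.ne').comp ρ h1
    have hdN : HasDerivAt (fun x : ℝ => (a^2+b^2)*x^2 + 2*a^2*b^2) ((a^2+b^2)*(2*ρ)) ρ := by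
      simpa using (((hasDerivAt_pow 2 ρ).const_mul (a^2+b^2)).add_const (2*a^2*b^2))
    have hdD : HasDerivAt
        (fun x : ℝ => (a^2-b^2)^2 * (Real.sqrt (x^2+a^2) * Real.sqrt (x^2+b^2)))
        ((a^2-b^2)^2 * ((1/(2*Real.sqrt (ρ^2+a^2))*(2*ρ))*Real.sqrt (ρ^2+b^2)
          + Real.sqrt (ρ^2+a^2)*(1/(2*Real.sqrt (ρ^2+b^2))*(2*ρ)))) ρ :=
      (hds.mul hdt).const_mul _
    have hD0 : (a^2-b^2)^2 * (Real.sqrt (ρ^2+a^2) * Real.sqrt (ρ^2+b^2)) ≠ 0 := by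
      positivity
    have := hdN.div hdD hD0
    exact this.congr_deriv (my_alg_aux a b ρ _ _ hab2 hs0 ht0 hs2 ht2).symm
  have hlim : Tendsto G atTop (𝓝 ((a^2+b^2)/(a^2-b^2)^2)) := by
    have h0 : ∀ᶠ ρ in (atTop : Filter ℝ), G ρ =
        ((a^2+b^2) + 2*a^2*b^2/ρ^2) /
          ((a^2-b^2)^2 * (Real.sqrt (1+a^2/ρ^2) * Real.sqrt (1+b^2/ρ^2))) := by
      filter_upwards [eventually_gt_atTop (0:ℝ)] with ρ hρ
      have hρ2 : (0:ℝ) < ρ^2 := by positivity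
      have hsa : Real.sqrt (ρ^2+a^2) = ρ * Real.sqrt (1+a^2/ρ^2) := by
        rw [show ρ^2+a^2 = ρ^2*(1+a^2/ρ^2) by field_simp, Real.sqrt_mul (by positivity),
          Real.sqrt_sq hρ.le]
      have hsb : Real.sqrt (ρ^2+b^2) = ρ * Real.sqrt (1+b^2/ρ^2) := by
        rw [show ρ^2+b^2 = ρ^2*(1+b^2/ρ^2) by field_simp, Real.sqrt_mul (by positivity),
          Real.sqrt_sq hρ.le]
      rw [hGdef]
      simp only [hsa, hsb]
      have hA : (0:ℝ) < Real.sqrt (1+a^2/ρ^2) := Real.sqrt_pos.2 (by positivity)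
      have hB : (0:ℝ) < Real.sqrt (1+b^2/ρ^2) := Real.sqrt_pos.2 (by positivity)
      field_simp
    apply Tendsto.congr' (h0.mono fun x hx => hx.symm)
    have l1 : Tendsto (fun ρ:ℝ => a^2/ρ^2) atTop (nhds 0) :=
      tendsto_const_nhds.div_atTop (tendsto_pow_atTop two_ne_zero)
    have l2 : Tendsto (fun ρ:ℝ => b^2/ρ^2) atTop (nhds 0) :=
      tendsto_const_nhds.div_atTop (tendsto_pow_atTop two_ne_zero)
    have l3 : Tendsto (fun ρ:ℝ => 2*a^2*b^2/ρ^2) atTop (nhds 0) :=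
      tendsto_const_nhds.div_atTop (tendsto_pow_atTop two_ne_zero)
    have s1 : Tendsto (fun ρ:ℝ => Real.sqrt (1+a^2/ρ^2)) atTop (nhds 1) := by
      have h := tendsto_const_nhds.add l1 (f := fun ρ:ℝ => (1:ℝ))
      rw [add_zero] at h
      simpa [Function.comp_def] using (Real.continuous_sqrt.tendsto (1:ℝ)).comp h
    have s2 : Tendsto (fun ρ:ℝ => Real.sqrt (1+b^2/ρ^2)) atTop (nhds 1) := by
      have h := tendsto_const_nhds.add l2 (f := fun ρ:ℝ => (1:ℝ))
      rw [add_zero] at h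
      simpa [Function.comp_def] using (Real.continuous_sqrt.tendsto (1:ℝ)).comp h
    have num : Tendsto (fun ρ:ℝ => (a^2+b^2) + 2*a^2*b^2/ρ^2) atTop (nhds (a^2+b^2)) := by
      simpa using tendsto_const_nhds.add l3
    have den : Tendsto (fun ρ:ℝ => (a^2-b^2)^2 * (Real.sqrt (1+a^2/ρ^2) * Real.sqrt (1+b^2/ρ^2)))
        atTop (nhds ((a^2-b^2)^2)) := by
      have h := (tendsto_const_nhds (x := (a^2-b^2)^2) (f := (atTop : Filter ℝ))).mul (s1.mul s2)
      rw [show ((a^2-b^2)^2 * (1*1) : ℝ) = (a^2-b^2)^2 by ring] at h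
      exact h
    have hden : ((a^2-b^2)^2 : ℝ) ≠ 0 := pow_ne_zero _ hab2
    exact num.div den hden
  have hG0 : G 0 = 2*a*b/(a^2-b^2)^2 := by
    rw [hGdef]
    simp only []
    rw [show (0:ℝ)^2+a^2 = a^2 by ring, show (0:ℝ)^2+b^2 = b^2 by ring,
      Real.sqrt_sq ha.le, Real.sqrt_sq hb.le]
    field_simp
    ring
  have hcont : ContinuousWithinAt G (Ici 0) 0 := (key 0).continuousAt.continuousWithinAt
  have hderiv : ∀ x ∈ Ioi (0:ℝ), HasDerivAt G
      (x^3 / (Real.sqrt (x^2+a^2)^3 * Real.sqrt (x^2+b^2)^3)) x := fun x _ => key x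
  have hpos : ∀ x ∈ Ioi (0:ℝ), 0 ≤ x^3 / (Real.sqrt (x^2+a^2)^3 * Real.sqrt (x^2+b^2)^3) := by
    intro x hx
    have : (0:ℝ) < x := hx
    positivity
  refine ⟨integrableOn_Ioi_deriv_of_nonneg hcont hderiv hpos hlim, ?_⟩
  rw [integral_Ioi_of_hasDerivAt_of_nonneg hcont hderiv hpos hlim, hG0]
  have h1 : a + b ≠ 0 := by positivity
  field_simp
  ring

theorem my_piece_aux {a c : ℝ} (hc : 0 < 2*a+c) :
    IntegrableOn (fun x : ℝ => ((2*x+c)^2)⁻¹) (Ioi a) ∧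
      ∫ x in Ioi a, ((2*x+c)^2)⁻¹ = 1/(2*(2*a+c)) := by
  set F : ℝ → ℝ := fun x => -(1/2) * (2*x+c)⁻¹ with hF
  have key : ∀ x ∈ Ioi a, HasDerivAt F (((2*x+c)^2)⁻¹) x := by
    intro x hx
    have hxa : a < x := hx
    have hne : 2*x+c ≠ 0 := by nlinarith
    have h1 : HasDerivAt (fun x : ℝ => 2*x+c) 2 x := by
      simpa using ((hasDerivAt_id x).const_mul 2).add_const c
    have h2 : HasDerivAt (fun x : ℝ => (2*x+c)⁻¹) (-((2*x+c)^2)⁻¹ * 2) x :=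
      (hasDerivAt_inv hne).comp x h1
    have h3 := h2.const_mul (-(1/2))
    exact h3.congr_deriv (by ring)
  have hcont : ContinuousWithinAt F (Ici a) a := by
    have hne : 2*a+c ≠ 0 := hc.ne'
    have : HasDerivAt F (-(1/2) * (-(((2*a+c)^2)⁻¹) * 2)) a := by
      have h1 : HasDerivAt (fun x : ℝ => 2*x+c) 2 a := by
        simpa using ((hasDerivAt_id a).const_mul 2).add_const c
      exact ((hasDerivAt_inv hne).comp a h1).const_mul (-(1/2))
    exact this.continuousAt.continuousWithinAt
  have hpos : ∀ x ∈ Ioi a, 0 ≤ ((2*x+c)^2)⁻¹ := fun x hx => by positivity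
  have hlim : Tendsto F atTop (𝓝 0) := by
    have h1 : Tendsto (fun x : ℝ => 2*x+c) atTop atTop :=
      (tendsto_atTop_atTop_of_monotone (fun u v huv => by linarith) (fun y => ⟨|y|+|c|, by
        have h1 := le_abs_self y
        have h2 := abs_nonneg y
        have h3 := abs_nonneg c
        have h4 := neg_abs_le c
        linarith⟩))
    have h2 : Tendsto (fun x : ℝ => (2*x+c)⁻¹) atTop (𝓝 0) :=
      tendsto_inv_atTop_zero.comp h1
    have h3 := h2.const_mul (-(1/2))
    rw [mul_zero] at h3
    exact h3
  refine ⟨integrableOn_Ioi_deriv_of_nonneg hcont key hpos hlim, ?_⟩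
  rw [integral_Ioi_of_hasDerivAt_of_nonneg hcont key hpos hlim, hF]
  simp only []
  field_simp
  ring

theorem my_zline : ∫⁻ z : ℝ, ENNReal.ofReal (1/(|z|+|z-1|)^2) = ENNReal.ofReal 2 := by
  have hsplit := lintegral_add_compl (μ := (volume : Measure ℝ))
    (fun z : ℝ => ENNReal.ofReal (1/(|z|+|z-1|)^2)) (measurableSet_Iic (a := (0:ℝ)))
  rw [compl_Iic] at hsplit
  rw [← hsplit]
  have hIoi : Ioc (0:ℝ) 1 ∪ Ioi 1 = Ioi 0 := Ioc_union_Ioi_eq_Ioi zero_le_one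
  rw [← hIoi, lintegral_union measurableSet_Ioi (Ioc_disjoint_Ioi le_rfl)]
  have P1 : ∫⁻ z in Ioc (0:ℝ) 1, ENNReal.ofReal (1/(|z|+|z-1|)^2) = ENNReal.ofReal 1 := by
    rw [setLIntegral_congr_fun measurableSet_Ioc
      (fun z hz => ?_), setLIntegral_one, Real.volume_Ioc]
    · norm_num
    · have h1 : |z| = z := abs_of_pos hz.1
      have h2 : |z-1| = 1-z := by
        rw [abs_of_nonpos (by linarith [hz.2])]; ring
      rw [h1, h2]
      norm_num
  have P2 : ∫⁻ z in Ioi (1:ℝ), ENNReal.ofReal (1/(|z|+|z-1|)^2) = ENNReal.ofReal (1/2) := by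
    obtain ⟨hint, hval⟩ := my_piece_aux (a := 1) (c := -1) (by norm_num)
    rw [setLIntegral_congr_fun measurableSet_Ioi
      (fun z hz => ?_)]
    · rw [← ofReal_integral_eq_lintegral_ofReal hint
        (ae_of_all _ (fun x => by positivity)), hval]
      norm_num
    · have h0 : (0:ℝ) < z := lt_trans one_pos hz
      have h1 : |z| = z := abs_of_pos h0
      have h2 : |z-1| = z-1 := abs_of_pos (by linarith [mem_Ioi.1 hz])
      rw [h1, h2]
      norm_num
      rw [show z+(z-1) = 2*z+(-1) by ring]
  have P3 : ∫⁻ z in Iic (0:ℝ), ENNReal.ofReal (1/(|z|+|z-1|)^2) = ENNReal.ofReal (1/2) := by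
    have hneg := (Measure.measurePreserving_neg (volume : Measure ℝ)).setLIntegral_comp_preimage_emb
      ((Homeomorph.neg ℝ).isClosedEmbedding.measurableEmbedding)
      (fun z : ℝ => ENNReal.ofReal (1/(|z|+|z-1|)^2)) (Iic 0)
    have hpre : (fun x : ℝ => -x) ⁻¹' (Iic 0) = Ici 0 := by
      ext x; simp
    rw [hpre] at hneg
    rw [← hneg, ← setLIntegral_congr (Ioi_ae_eq_Ici (a := (0:ℝ)))]
    obtain ⟨hint, hval⟩ := my_piece_aux (a := 0) (c := 1) (by norm_num)
    rw [setLIntegral_congr_fun measurableSet_Ioi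
      (fun x hx => ?_)]
    · rw [← ofReal_integral_eq_lintegral_ofReal hint
        (ae_of_all _ (fun x => by positivity)), hval]
      norm_num
    · have h0 : (0:ℝ) < x := hx
      have h1 : |(-x)| = x := by rw [abs_neg, abs_of_pos h0]
      have h2 : |(-x)-1| = x+1 := by rw [abs_of_neg (by linarith)]; ring
      rw [h1, h2]
      norm_num
      rw [show x+(x+1) = 2*x+1 by ring]
  rw [P1, P2, P3, ← ENNReal.ofReal_add (by norm_num) (by norm_num),
    ← ENNReal.ofReal_add (by norm_num) (by norm_num)]
  norm_num

theorem my_theta : ∫⁻ θ in Ioo (-π) π, ENNReal.ofReal (Real.sin θ^2) = ENNReal.ofReal π := by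
  have hint : IntegrableOn (fun θ : ℝ => Real.sin θ^2) (Ioo (-π) π) :=
    ((continuous_sin.pow 2).integrableOn_Icc).mono_set Ioo_subset_Icc_self
  rw [← ofReal_integral_eq_lintegral_ofReal hint (ae_of_all _ (fun x => sq_nonneg _))]
  congr 1
  rw [setIntegral_congr_set Ioo_ae_eq_Ioc, ← intervalIntegral.integral_of_le (by linarith [pi_pos]),
    integral_sin_sq]
  simp

def Teq : EuclideanSpace ℝ (Fin 3) ≃ᵐ ℝ × (ℝ × ℝ) :=
  (MeasurableEquiv.toLp 2 (Fin 3 → ℝ)).symm.trans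
    ((MeasurableEquiv.piFinSuccAbove (fun _ : Fin 3 => ℝ) 2).trans
      ((MeasurableEquiv.refl ℝ).prodCongr MeasurableEquiv.finTwoArrow))

theorem Teq_mp : MeasurePreserving (⇑Teq) volume volume :=
  (((MeasurePreserving.id (volume : Measure ℝ)).prod
      (volume_preserving_finTwoArrow ℝ)).comp
    ((volume_preserving_piFinSuccAbove (fun _ : Fin 3 => ℝ) 2).comp
      (EuclideanSpace.volume_preserving_symm_measurableEquiv_toLp (Fin 3))))

theorem Teq_apply (x : EuclideanSpace ℝ (Fin 3)) : Teq x = (x 2, (x 0, x 1)) := by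
  simp [Teq, MeasurableEquiv.piFinSuccAbove, MeasurableEquiv.finTwoArrow,
    Fin.insertNthEquiv, MeasurableEquiv.prodCongr]
  constructor <;> rfl

end Helpers

/-- `∫_{ℝ³} x₂² / (‖x‖³‖x−e₃‖³) dx = 2π`, where `x₂` is the second coordinate. -/
theorem integral_sq_second_coord :
    ∫ x : EuclideanSpace ℝ (Fin 3), (x 1) ^ 2 / (‖x‖ ^ 3 * ‖x - e3‖ ^ 3) = 2 * π := by
  classical
  -- the function downstairs
  set P : ℝ × ℝ × ℝ → ENNReal := fun p => ENNReal.ofReal (p.2.2^2 /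
      (Real.sqrt (p.2.1^2+p.2.2^2+p.1^2)^3 * Real.sqrt (p.2.1^2+p.2.2^2+(p.1-1)^2)^3)) with hP
  have hPreal : Measurable fun p : ℝ × ℝ × ℝ => p.2.2^2 /
      (Real.sqrt (p.2.1^2+p.2.2^2+p.1^2)^3 * Real.sqrt (p.2.1^2+p.2.2^2+(p.1-1)^2)^3) := by
    apply Measurable.div
    · exact (continuous_snd.snd.pow 2).measurable
    · apply Measurable.mul
      · exact ((Real.continuous_sqrt.comp
          (((continuous_snd.fst.pow 2).add (continuous_snd.snd.pow 2)).add
            (continuous_fst.pow 2))).pow 3).measurable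
      · exact ((Real.continuous_sqrt.comp
          (((continuous_snd.fst.pow 2).add (continuous_snd.snd.pow 2)).add
            ((continuous_fst.sub continuous_const).pow 2))).pow 3).measurable
  have hPm : Measurable P := hPreal.ennreal_ofReal
  -- pointwise identification
  have hpt : ∀ x : EuclideanSpace ℝ (Fin 3),
      ENNReal.ofReal ((x 1) ^ 2 / (‖x‖ ^ 3 * ‖x - e3‖ ^ 3)) = P (Teq x) := by
    intro x
    rw [Teq_apply]
    have hn1 : ‖x‖ = Real.sqrt ((x 0)^2+(x 1)^2+(x 2)^2) := by
      rw [EuclideanSpace.norm_eq]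
      congr 1
      rw [Fin.sum_univ_three]
      simp [Real.norm_eq_abs, sq_abs]
    have hn2 : ‖x - e3‖ = Real.sqrt ((x 0)^2+(x 1)^2+((x 2)-1)^2) := by
      rw [EuclideanSpace.norm_eq]
      congr 1
      rw [Fin.sum_univ_three]
      simp [e3, Real.norm_eq_abs, sq_abs]
    rw [hn1, hn2]
  -- nonnegativity and measurability of the integrand upstairs
  have hc1 : Continuous fun x : EuclideanSpace ℝ (Fin 3) => x 1 :=
    (EuclideanSpace.proj (1 : Fin 3) : EuclideanSpace ℝ (Fin 3) →L[ℝ] ℝ).continuous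
  have hfm : Measurable fun x : EuclideanSpace ℝ (Fin 3) =>
      (x 1) ^ 2 / (‖x‖ ^ 3 * ‖x - e3‖ ^ 3) :=
    ((hc1.pow 2).measurable).div
      (((continuous_norm.pow 3).mul
        (((continuous_id.sub continuous_const).norm).pow 3)).measurable)
  rw [integral_eq_lintegral_of_nonneg_ae (ae_of_all _ (fun x => by positivity))
        hfm.aestronglyMeasurable]
  -- main lintegral computation
  have hmain : ∫⁻ x : EuclideanSpace ℝ (Fin 3),
      ENNReal.ofReal ((x 1) ^ 2 / (‖x‖ ^ 3 * ‖x - e3‖ ^ 3)) = ENNReal.ofReal (2*π) := by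
    calc
      ∫⁻ x : EuclideanSpace ℝ (Fin 3), ENNReal.ofReal ((x 1) ^ 2 / (‖x‖ ^ 3 * ‖x - e3‖ ^ 3))
          = ∫⁻ x : EuclideanSpace ℝ (Fin 3), P (Teq x) := lintegral_congr hpt
      _ = ∫⁻ p : ℝ × ℝ × ℝ, P p := Teq_mp.lintegral_comp_emb Teq.measurableEmbedding P
      _ = ∫⁻ z : ℝ, ∫⁻ q : ℝ × ℝ, P (z, q) := by
          rw [Measure.volume_eq_prod, lintegral_prod _ hPm.aemeasurable]
      _ = ∫⁻ z : ℝ, ENNReal.ofReal (1/(|z|+|z-1|)^2) * ENNReal.ofReal π := by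
          apply lintegral_congr_ae
          have hfin : (volume ({0, 1/2, 1} : Set ℝ)) = 0 :=
            (Set.toFinite _).measure_zero _
          filter_upwards [measure_eq_zero_iff_ae_notMem.mp hfin] with z hz
          have hz0 : z ≠ 0 := fun h => hz (by simp [h])
          have hzh : z ≠ 1/2 := fun h => hz (by simp [h])
          have hz1 : z ≠ 1 := fun h => hz (by simp [h])
          have ha : 0 < |z| := abs_pos.2 hz0
          have hb : 0 < |z-1| := abs_pos.2 (sub_ne_zero.2 hz1)
          have hab : |z| ≠ |z-1| := by
            intro h
            rcases abs_eq_abs.1 h with h' | h'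
            · linarith
            · apply hzh; linarith
          -- polar coordinates in the (x,y) plane
          have hpolar := my_lintegral_comp_polarCoord_symm (fun q : ℝ × ℝ => P (z, q))
          rw [← hpolar]
          have htarget : polarCoord.target = Ioi (0:ℝ) ×ˢ Ioo (-π) π := rfl
          rw [htarget, Measure.volume_eq_prod, ← Measure.prod_restrict]
          have hqm : Measurable fun p : ℝ × ℝ =>
              ENNReal.ofReal p.1 * P (z, polarCoord.symm p) := by
            apply Measurable.mul (f := fun p : ℝ × ℝ => ENNReal.ofReal p.1)
              (g := fun p => P (z, polarCoord.symm p))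
            · exact measurable_fst.ennreal_ofReal
            · apply hPm.comp
              apply measurable_const.prodMk
              exact ((measurable_fst.mul
                  (Real.continuous_cos.measurable.comp measurable_snd)).prodMk
                (measurable_fst.mul (Real.continuous_sin.measurable.comp measurable_snd)))
          rw [lintegral_prod _ hqm.aemeasurable]
          -- inner θ integral
          have hinner : ∀ ρ ∈ Ioi (0:ℝ),
              ∫⁻ θ in Ioo (-π) π, ENNReal.ofReal ρ * P (z, polarCoord.symm (ρ, θ)) =
              ENNReal.ofReal (ρ^3 / (Real.sqrt (ρ^2+|z|^2)^3 * Real.sqrt (ρ^2+|z-1|^2)^3)) *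
                ENNReal.ofReal π := by
            intro ρ hρ
            have hρ0 : (0:ℝ) < ρ := hρ
            have hstep : ∀ θ : ℝ, ENNReal.ofReal ρ * P (z, polarCoord.symm (ρ, θ)) =
                ENNReal.ofReal (ρ^3 / (Real.sqrt (ρ^2+|z|^2)^3 * Real.sqrt (ρ^2+|z-1|^2)^3)) *
                  ENNReal.ofReal (Real.sin θ^2) := by
              intro θ
              have hps : polarCoord.symm (ρ, θ) = (ρ * Real.cos θ, ρ * Real.sin θ) := rfl
              have hring : (ρ*Real.cos θ)^2+(ρ*Real.sin θ)^2 = ρ^2 := by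
                have h := Real.sin_sq_add_cos_sq θ
                linear_combination ρ^2 * h
              rw [hps, hP]
              simp only []
              rw [hring, sq_abs, sq_abs]
              rw [← ENNReal.ofReal_mul hρ0.le]
              rw [show ρ * ((ρ*Real.sin θ)^2 /
                  (Real.sqrt (ρ^2+z^2)^3 * Real.sqrt (ρ^2+(z-1)^2)^3)) =
                (ρ^3 / (Real.sqrt (ρ^2+z^2)^3 * Real.sqrt (ρ^2+(z-1)^2)^3)) * Real.sin θ^2
                from by ring]
              rw [ENNReal.ofReal_mul (by positivity)]
            rw [setLIntegral_congr_fun measurableSet_Ioo (fun θ _ => hstep θ),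
              lintegral_const_mul' _ _ ENNReal.ofReal_ne_top, my_theta]
          rw [setLIntegral_congr_fun measurableSet_Ioi hinner,
            lintegral_mul_const' _ _ ENNReal.ofReal_ne_top]
          obtain ⟨hint, hval⟩ := my_radial_aux ha hb hab
          rw [← ofReal_integral_eq_lintegral_ofReal hint
            ((ae_restrict_iff' measurableSet_Ioi).2 (ae_of_all _ (fun x hx => by
              have hx0 : (0:ℝ) < x := hx
              positivity))), hval]
      _ = (∫⁻ z : ℝ, ENNReal.ofReal (1/(|z|+|z-1|)^2)) * ENNReal.ofReal π := by
          rw [lintegral_mul_const' _ _ ENNReal.ofReal_ne_top]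
      _ = ENNReal.ofReal 2 * ENNReal.ofReal π := by rw [my_zline]
      _ = ENNReal.ofReal (2*π) := by
          rw [← ENNReal.ofReal_mul (by norm_num)]
  rw [hmain, ENNReal.toReal_ofReal (by positivity)]
end
end

section
/- ∫_{ℝ³} (x₃² − x₃) / (‖x‖³ · ‖x − e₃‖³) dx = 0, where e₃ = (0,0,1) and x₃ denotes the third coordinate of x. -/
open MeasureTheory Real
open scoped RealInnerProductSpace

open Set Filter Topology

noncomputable section

lemma radial_deriv (a b : ℝ) (ha : 0 < a) (hb : 0 < b) (hab : a ≠ b) (r : ℝ) :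
    HasDerivAt (fun r : ℝ => -(2*r^2+a+b)/((a-b)^2 * Real.sqrt (r^2+a) * Real.sqrt (r^2+b)))
      (r / (Real.sqrt (r^2+a)^3 * Real.sqrt (r^2+b)^3)) r := by
  have hra : (0:ℝ) < r^2 + a := by positivity
  have hrb : (0:ℝ) < r^2 + b := by positivity
  have hsa : HasDerivAt (fun r : ℝ => Real.sqrt (r^2+a)) (r / Real.sqrt (r^2+a)) r := by
    have h1 : HasDerivAt (fun r : ℝ => r^2+a) (2*r) r := by
      simpa [mul_comm] using ((hasDerivAt_pow 2 r).add_const a)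
    have := (Real.hasDerivAt_sqrt hra.ne').comp r h1
    refine this.congr_deriv ?_
    field_simp
  have hsb : HasDerivAt (fun r : ℝ => Real.sqrt (r^2+b)) (r / Real.sqrt (r^2+b)) r := by
    have h1 : HasDerivAt (fun r : ℝ => r^2+b) (2*r) r := by
      simpa [mul_comm] using ((hasDerivAt_pow 2 r).add_const b)
    have := (Real.hasDerivAt_sqrt hrb.ne').comp r h1
    refine this.congr_deriv ?_
    field_simp
  have hsa0 : Real.sqrt (r^2+a) ≠ 0 := (Real.sqrt_pos.2 hra).ne'
  have hsb0 : Real.sqrt (r^2+b) ≠ 0 := (Real.sqrt_pos.2 hrb).ne'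
  have hab2 : (a-b)^2 ≠ 0 := pow_ne_zero _ (sub_ne_zero.2 hab)
  have hnum : HasDerivAt (fun r : ℝ => -(2*r^2+a+b)) (-(4*r)) r := by
    have h : HasDerivAt (fun r : ℝ => 2*r^2+a+b) (4*r) r := by
      have := (((hasDerivAt_pow 2 r).const_mul 2).add_const a).add_const b
      refine this.congr_deriv ?_
      ring
    exact h.neg
  have hden : HasDerivAt (fun r : ℝ => (a-b)^2 * Real.sqrt (r^2+a) * Real.sqrt (r^2+b))
      ((a-b)^2 * (r / Real.sqrt (r^2+a)) * Real.sqrt (r^2+b)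
        + (a-b)^2 * Real.sqrt (r^2+a) * (r / Real.sqrt (r^2+b))) r := by
    have := ((hsa.const_mul ((a-b)^2)).mul hsb)
    exact this
  have hden0 : (a-b)^2 * Real.sqrt (r^2+a) * Real.sqrt (r^2+b) ≠ 0 :=
    mul_ne_zero (mul_ne_zero hab2 hsa0) hsb0
  have H := hnum.div hden hden0
  refine H.congr_deriv ?_
  have h2a : Real.sqrt (r^2+a)^2 = r^2 + a := Real.sq_sqrt hra.le
  have h2b : Real.sqrt (r^2+b)^2 = r^2 + b := Real.sq_sqrt hrb.le
  set sa := Real.sqrt (r^2+a) with hsadef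
  set sb := Real.sqrt (r^2+b) with hsbdef
  have e1 : (2*r^2+a+b) = sa^2+sb^2 := by rw [h2a, h2b]; ring
  have e2 : ((a-b)^2 : ℝ) = (sa^2-sb^2)^2 := by rw [h2a, h2b]; ring
  have hss : sa^2 - sb^2 ≠ 0 := by rw [h2a, h2b]; simpa using sub_ne_zero.2 hab
  rw [e1, e2]
  field_simp
  ring

lemma radial_tendsto (a b : ℝ) (ha : 0 < a) (hb : 0 < b) (hab : a ≠ b) :
    Tendsto (fun r : ℝ => -(2*r^2+a+b)/((a-b)^2 * Real.sqrt (r^2+a) * Real.sqrt (r^2+b)))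
      atTop (𝓝 (-2/(a-b)^2)) := by
  have hab2 : ((a-b)^2 : ℝ) ≠ 0 := pow_ne_zero _ (sub_ne_zero.2 hab)
  set G : ℝ → ℝ := fun s => -(2+(a+b)*s^2)/((a-b)^2 * Real.sqrt (1+a*s^2) * Real.sqrt (1+b*s^2))
    with hGdef
  have hG : ContinuousAt G 0 := by
    apply ContinuousAt.div
    · fun_prop
    · have h1 : Continuous (fun s : ℝ => (a-b)^2 * Real.sqrt (1+a*s^2) * Real.sqrt (1+b*s^2)) := by
        fun_prop
      exact h1.continuousAt
    · norm_num [hab2]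
  have hG0 : G 0 = -2/(a-b)^2 := by simp [hGdef]
  have h2 : Tendsto (fun r : ℝ => G r⁻¹) atTop (𝓝 (-2/(a-b)^2)) := by
    rw [← hG0]
    exact hG.tendsto.comp tendsto_inv_atTop_zero
  apply h2.congr'
  filter_upwards [eventually_gt_atTop (0:ℝ)] with r hr
  have hr0 : r ≠ 0 := hr.ne'
  have hsa : Real.sqrt (1+a*(r⁻¹)^2) = Real.sqrt (r^2+a) / r := by
    rw [show (1+a*(r⁻¹)^2 : ℝ) = (r^2+a)/r^2 by field_simp,
      Real.sqrt_div (by positivity), Real.sqrt_sq hr.le]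
  have hsb : Real.sqrt (1+b*(r⁻¹)^2) = Real.sqrt (r^2+b) / r := by
    rw [show (1+b*(r⁻¹)^2 : ℝ) = (r^2+b)/r^2 by field_simp,
      Real.sqrt_div (by positivity), Real.sqrt_sq hr.le]
  have hsa0 : Real.sqrt (r^2+a) ≠ 0 := by positivity
  have hsb0 : Real.sqrt (r^2+b) ≠ 0 := by positivity
  simp only [hGdef, hsa, hsb]
  field_simp
  ring

lemma radial_integral (a b : ℝ) (ha : 0 < a) (hb : 0 < b) (hab : a ≠ b) :
    ∫ r in Ioi (0:ℝ), r / (Real.sqrt (r^2+a)^3 * Real.sqrt (r^2+b)^3)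
      = (a+b)/((a-b)^2 * Real.sqrt a * Real.sqrt b) - 2/(a-b)^2 := by
  have hab2 : ((a-b)^2 : ℝ) ≠ 0 := pow_ne_zero _ (sub_ne_zero.2 hab)
  have hcont : ContinuousWithinAt
      (fun r : ℝ => -(2*r^2+a+b)/((a-b)^2 * Real.sqrt (r^2+a) * Real.sqrt (r^2+b)))
      (Ici 0) 0 := by
    apply Continuous.continuousWithinAt
    apply Continuous.div (by fun_prop) (by fun_prop)
    intro x
    have h1 : (0:ℝ) < (a-b)^2 * Real.sqrt (x^2+a) * Real.sqrt (x^2+b) := by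
      have := (sub_ne_zero.2 hab)
      positivity
    exact h1.ne'
  rw [integral_Ioi_of_hasDerivAt_of_nonneg hcont
    (fun x _ => radial_deriv a b ha hb hab x)
    (fun x hx => div_nonneg (le_of_lt hx) (by positivity))
    (radial_tendsto a b ha hb hab)]
  have h0a : Real.sqrt ((0:ℝ)^2+a) = Real.sqrt a := by norm_num
  have h0b : Real.sqrt ((0:ℝ)^2+b) = Real.sqrt b := by norm_num
  rw [h0a, h0b]
  ring

lemma aux_out (w c p : ℝ) (hw : w ≠ 0) (hc : c ≠ 0) :
    w * ((1+2*w)/(c^2 * (w)) - 2/c^2) * (2*p) = 2*p/c^2 := by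
  field_simp
  ring

lemma aux_in (w c p : ℝ) (hw : w ≠ 0) (hc : c ≠ 0) (h : c^2 = 1+4*w) :
    w * ((1+2*w)/(c^2 * (-w)) - 2/c^2) * (2*p) = -2*p := by
  have hc2 : c^2 ≠ 0 := pow_ne_zero _ hc
  rw [h] at *
  have hc3 : 1 + w*4 ≠ 0 := by rw [mul_comm]; exact hc2
  field_simp
  ring

lemma planar_integral (z : ℝ) (h0 : z ≠ 0) (h1 : z ≠ 1) (hh : z ≠ 1/2) :
    ∫ p : ℝ × ℝ, (z^2 - z) /
        (Real.sqrt (p.1^2 + p.2^2 + z^2)^3 * Real.sqrt (p.1^2 + p.2^2 + (z-1)^2)^3)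
      = if 0 < z ∧ z < 1 then (-2)*π else 2*π/(2*z-1)^2 := by
  have ha : 0 < z^2 := by positivity
  have h1' : z - 1 ≠ 0 := sub_ne_zero.2 h1
  have hb : 0 < (z-1)^2 := by positivity
  have hz2 : (2*z-1) ≠ 0 := fun h => hh (by linarith)
  have hab : z^2 ≠ (z-1)^2 := by
    intro h
    exact hz2 (by nlinarith)
  rw [← integral_comp_polarCoord_symm]
  have hcongr : ∀ p : ℝ × ℝ,
      p.1 • ((fun q : ℝ × ℝ => (z^2 - z) /
        (Real.sqrt (q.1^2 + q.2^2 + z^2)^3 * Real.sqrt (q.1^2 + q.2^2 + (z-1)^2)^3))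
          (polarCoord.symm p))
      = (fun r : ℝ => (z^2-z) * (r / (Real.sqrt (r^2+z^2)^3 * Real.sqrt (r^2+(z-1)^2)^3))) p.1
        * (fun _ : ℝ => (1:ℝ)) p.2 := by
    intro p
    have hq : (p.1 * Real.cos p.2)^2 + (p.1 * Real.sin p.2)^2 = p.1^2 := by
      have := Real.sin_sq_add_cos_sq p.2
      ring_nf
      nlinarith [this]
    simp only [polarCoord_symm_apply, smul_eq_mul, hq, mul_one]
    ring
  rw [show (fun p : ℝ × ℝ => p.1 • ((fun q : ℝ × ℝ => (z^2 - z) /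
        (Real.sqrt (q.1^2 + q.2^2 + z^2)^3 * Real.sqrt (q.1^2 + q.2^2 + (z-1)^2)^3))
          (polarCoord.symm p)))
      = fun p : ℝ × ℝ =>
        (fun r : ℝ => (z^2-z) * (r / (Real.sqrt (r^2+z^2)^3 * Real.sqrt (r^2+(z-1)^2)^3))) p.1
        * (fun _ : ℝ => (1:ℝ)) p.2 from funext hcongr]
  rw [polarCoord_target, Measure.volume_eq_prod]
  rw [setIntegral_prod_mul (μ := (volume : Measure ℝ)) (ν := (volume : Measure ℝ))
    (fun r : ℝ => (z^2-z) * (r / (Real.sqrt (r^2+z^2)^3 * Real.sqrt (r^2+(z-1)^2)^3)))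
    (fun _ : ℝ => (1:ℝ)) (Ioi 0) (Ioo (-π) π)]
  have hθ : ∫ _ in Ioo (-π) π, (1:ℝ) = 2*π := by
    simp [Real.volume_Ioo]
    rw [max_eq_left (by linarith [Real.pi_pos])]
    ring
  rw [hθ, MeasureTheory.integral_const_mul, radial_integral (z^2) ((z-1)^2) ha hb hab]
  have key : z^2 - (z-1)^2 = 2*z-1 := by ring
  have hA : z^2+(z-1)^2 = 1 + 2*(z^2-z) := by ring
  have hw : z^2 - z ≠ 0 := by
    have : z^2 - z = z * (z-1) := by ring
    rw [this]
    exact mul_ne_zero h0 h1'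
  rw [key, hA, mul_assoc ((2*z-1)^2)]
  have hsq1 : Real.sqrt (z^2) = |z| := Real.sqrt_sq_eq_abs z
  have hsq2 : Real.sqrt ((z-1)^2) = |z-1| := Real.sqrt_sq_eq_abs (z-1)
  by_cases hmid : 0 < z ∧ z < 1
  · rw [if_pos hmid]
    obtain ⟨hz0, hz1⟩ := hmid
    rw [show Real.sqrt (z^2) * Real.sqrt ((z-1)^2) = -(z^2-z) by
      rw [hsq1, hsq2, abs_of_pos hz0, abs_of_neg (by linarith : z-1 < 0)]; ring]
    exact aux_in _ _ _ hw hz2 (by ring)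
  · rw [if_neg hmid]
    have hout : Real.sqrt (z^2) * Real.sqrt ((z-1)^2) = z^2-z := by
      rcases lt_trichotomy z 0 with hz | hz | hz
      · rw [hsq1, hsq2, abs_of_neg hz, abs_of_neg (by linarith : z-1 < 0)]; ring
      · exact absurd hz h0
      · have hz1 : 1 < z := by
          rcases lt_trichotomy z 1 with h | h | h
          · exact absurd ⟨hz, h⟩ hmid
          · exact absurd h h1
          · exact h
        rw [hsq1, hsq2, abs_of_pos hz, abs_of_pos (by linarith : 0 < z-1)]; ring
    rw [hout]
    exact aux_out _ _ _ hw hz2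

def Tpw (z : ℝ) : ℝ := if 0 < z ∧ z < 1 then (-2)*π else 2*π/(2*z-1)^2

lemma deriv_piece (c : ℝ) (z : ℝ) (hz : 2*z+c ≠ 0) :
    HasDerivAt (fun z : ℝ => -π * (2*z+c)⁻¹) (2*π/(2*z+c)^2) z := by
  have h1 : HasDerivAt (fun z : ℝ => 2*z+c) 2 z := by
    simpa using ((hasDerivAt_id z).const_mul 2).add_const c
  have := (h1.inv hz).const_mul (-π)
  refine this.congr_deriv ?_
  field_simp

lemma tendsto_piece (c : ℝ) : Tendsto (fun z : ℝ => -π * (2*z+c)⁻¹) atTop (𝓝 0) := by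
  have h1 : Tendsto (fun z : ℝ => 2*z+c) atTop atTop := by
    apply Filter.tendsto_atTop_add_const_right
    exact (tendsto_id.const_mul_atTop (by norm_num : (0:ℝ) < 2))
  have h2 : Tendsto (fun z : ℝ => (2*z+c)⁻¹) atTop (𝓝 0) := h1.inv_tendsto_atTop
  simpa using h2.const_mul (-π)

lemma integral_piece_Ioi : ∫ z in Ioi (1:ℝ), 2*π/(2*z-1)^2 = π := by
  have h : ∀ z ∈ Ioi (1:ℝ), HasDerivAt (fun z : ℝ => -π * (2*z+(-1))⁻¹) (2*π/(2*z-1)^2) z := by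
    intro z hz
    have h1 : 2*z+(-1) ≠ 0 := by simp only [mem_Ioi] at hz; intro h; linarith
    have := deriv_piece (-1) z h1
    convert this using 2
    ring
  rw [integral_Ioi_of_hasDerivAt_of_nonneg _ h (fun x hx => by positivity) (tendsto_piece (-1))]
  · norm_num
  · apply ContinuousAt.continuousWithinAt
    have h1 : (2*(1:ℝ)+(-1)) ≠ 0 := by norm_num
    exact ((continuousAt_id.const_mul 2).add continuousAt_const).inv₀ h1 |>.const_mul (-π)

lemma integral_piece_Ioi0 : ∫ z in Ioi (0:ℝ), 2*π/(2*z+1)^2 = π := by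
  have h : ∀ z ∈ Ioi (0:ℝ), HasDerivAt (fun z : ℝ => -π * (2*z+1)⁻¹) (2*π/(2*z+1)^2) z := by
    intro z hz
    simp only [mem_Ioi] at hz
    exact deriv_piece 1 z (by linarith)
  rw [integral_Ioi_of_hasDerivAt_of_nonneg _ h (fun x hx => by positivity) (tendsto_piece 1)]
  · norm_num
  · apply ContinuousAt.continuousWithinAt
    have h1 : (2*(0:ℝ)+1) ≠ 0 := by norm_num
    exact ((continuousAt_id.const_mul 2).add continuousAt_const).inv₀ h1 |>.const_mul (-π)

lemma Tpw_integral (hInt : Integrable Tpw) : ∫ z, Tpw z = 0 := by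
  have hIic : ∫ z in Iic (0:ℝ), Tpw z = π := by
    have he : EqOn Tpw (fun z : ℝ => (fun x : ℝ => 2*π/(2*x+1)^2) (-z)) (Iic 0) := by
      intro z hz
      simp only [mem_Iic] at hz
      have : ¬(0 < z ∧ z < 1) := by rintro ⟨h1, _⟩; linarith
      simp only [Tpw, if_neg this]
      congr 1
      ring
    rw [setIntegral_congr_fun measurableSet_Iic he]
    have hcn := integral_comp_neg_Iic (0:ℝ) (fun x : ℝ => 2*π/(2*x+1)^2)
    rw [neg_zero] at hcn
    rw [hcn, integral_piece_Ioi0]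
  have hIoc : ∫ z in Ioc (0:ℝ) 1, Tpw z = -(2*π) := by
    have h1 : ∀ᵐ z : ℝ, z ∉ ({1} : Set ℝ) :=
      measure_eq_zero_iff_ae_notMem.mp Real.volume_singleton
    have he : ∀ᵐ z : ℝ, z ∈ Ioc (0:ℝ) 1 → Tpw z = (-2)*π := by
      filter_upwards [h1] with z hz hmem
      simp only [mem_singleton_iff] at hz
      rw [mem_Ioc] at hmem
      obtain ⟨hz0, hz1⟩ := hmem
      have hlt : z < 1 := lt_of_le_of_ne hz1 hz
      simp [Tpw, hz0, hlt]
    rw [setIntegral_congr_ae measurableSet_Ioc he]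
    simp [Real.volume_Ioc]
  have hIoi : ∫ z in Ioi (1:ℝ), Tpw z = π := by
    have he : EqOn Tpw (fun z : ℝ => 2*π/(2*z-1)^2) (Ioi 1) := by
      intro z hz
      simp only [mem_Ioi] at hz
      have : ¬(0 < z ∧ z < 1) := by rintro ⟨_, h2⟩; linarith
      simp only [Tpw, if_neg this]
    rw [setIntegral_congr_fun measurableSet_Ioi he, integral_piece_Ioi]
  have hsplit2 : ∫ z in Ioi (0:ℝ), Tpw z = (∫ z in Ioc (0:ℝ) 1, Tpw z) + ∫ z in Ioi (1:ℝ), Tpw z := by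
    have hu := setIntegral_union (μ := volume) (f := Tpw)
      (Set.Ioc_disjoint_Ioi (le_refl (1:ℝ)) : Disjoint (Ioc (0:ℝ) 1) (Ioi 1))
      measurableSet_Ioi hInt.integrableOn hInt.integrableOn
    rw [Set.Ioc_union_Ioi_eq_Ioi (by norm_num : (0:ℝ) ≤ 1)] at hu
    exact hu

  have htot : (∫ z in Iic (0:ℝ), Tpw z) + (∫ z in Ioi (0:ℝ), Tpw z) = ∫ z, Tpw z :=
    intervalIntegral.integral_Iic_add_Ioi hInt.integrableOn hInt.integrableOn
  rw [← htot, hsplit2, hIic, hIoc, hIoi]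
  ring

def Gfun (p : ℝ × ℝ × ℝ) : ℝ :=
  (p.1^2 - p.1) /
    (Real.sqrt (p.2.1^2 + p.2.2^2 + p.1^2)^3 * Real.sqrt (p.2.1^2 + p.2.2^2 + (p.1-1)^2)^3)

/-- `∫_{ℝ³} (x₃² − x₃) / (‖x‖³‖x−e₃‖³) dx = 0`, where `x₃` is the third coordinate. -/
theorem integral_third_coord_term :
    ∫ x : EuclideanSpace ℝ (Fin 3), ((x 2) ^ 2 - x 2) / (‖x‖ ^ 3 * ‖x - e3‖ ^ 3) = 0 := by
  classical
  set m1 : (Fin 3 → ℝ) ≃ᵐ ℝ × (Fin 2 → ℝ) :=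
    MeasurableEquiv.piFinSuccAbove (fun _ : Fin 3 => ℝ) 2 with hm1def
  set m2 : (ℝ × (Fin 2 → ℝ)) ≃ᵐ ℝ × (ℝ × ℝ) :=
    (MeasurableEquiv.refl ℝ).prodCongr MeasurableEquiv.finTwoArrow with hm2def
  set Φ : (ℝ × ℝ × ℝ) ≃ᵐ EuclideanSpace ℝ (Fin 3) :=
    (m2.symm.trans m1.symm).trans (MeasurableEquiv.toLp 2 (Fin 3 → ℝ)) with hΦdef
  have hm1 : MeasurePreserving m1 := volume_preserving_piFinSuccAbove (fun _ : Fin 3 => ℝ) 2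
  have hm2 : MeasurePreserving m2 := by
    have h := (MeasurePreserving.id (volume : Measure ℝ)).prod
      (volume_preserving_finTwoArrow ℝ)
    rw [← Measure.volume_eq_prod, ← Measure.volume_eq_prod] at h
    exact h
  have hΦ : MeasurePreserving Φ := by
    have h := ((EuclideanSpace.volume_preserving_symm_measurableEquiv_toLp (Fin 3)).symm).comp
      ((hm1.symm m1).comp (hm2.symm m2))
    exact h
  have hins : ∀ (z u v : ℝ), Fin.insertNth (2 : Fin 3) z ![u, v] = ![u, v, z] := by
    intro z u v
    ext j
    fin_cases j <;> rfl
  have hpt : ∀ p : ℝ × ℝ × ℝ,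
      ((fun x : EuclideanSpace ℝ (Fin 3) => ((x 2) ^ 2 - x 2) / (‖x‖ ^ 3 * ‖x - e3‖ ^ 3)) (Φ p))
        = Gfun p := by
    rintro ⟨z, u, v⟩
    have hx : ∀ j : Fin 3, (Φ (z, u, v)) j = (![u, v, z] : Fin 3 → ℝ) j := by
      intro j
      fin_cases j <;> simp [Φ, m1, m2] <;> rfl
    have h2 : (Φ (z, u, v)) 2 = z := hx 2
    have hn1 : ‖Φ (z, u, v)‖ = Real.sqrt (u^2+v^2+z^2) := by
      rw [EuclideanSpace.norm_eq]
      congr 1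
      rw [Fin.sum_univ_three, hx 0, hx 1, hx 2]
      simp [Real.norm_eq_abs, sq_abs]
    have hsub : ∀ j : Fin 3, (Φ (z, u, v) - e3) j = (![u, v, z-1] : Fin 3 → ℝ) j := by
      intro j
      have hj : (Φ (z, u, v) - e3) j = Φ (z, u, v) j - e3 j := rfl
      rw [hj, hx j]
      fin_cases j
      · show u - e3 0 = u
        norm_num [e3]
      · show v - e3 1 = v
        norm_num [e3]
      · show z - e3 2 = z - 1
        norm_num [e3]
        rfl
    have hn2 : ‖Φ (z, u, v) - e3‖ = Real.sqrt (u^2+v^2+(z-1)^2) := by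
      rw [EuclideanSpace.norm_eq]
      congr 1
      rw [Fin.sum_univ_three, hsub 0, hsub 1, hsub 2]
      simp [Real.norm_eq_abs, sq_abs]
    simp only [h2, hn1, hn2, Gfun]
  have key : (∫ x : EuclideanSpace ℝ (Fin 3), ((x 2) ^ 2 - x 2) / (‖x‖ ^ 3 * ‖x - e3‖ ^ 3))
      = ∫ p : ℝ × ℝ × ℝ, Gfun p := by
    rw [← hΦ.integral_comp Φ.measurableEmbedding
      (fun x : EuclideanSpace ℝ (Fin 3) => ((x 2) ^ 2 - x 2) / (‖x‖ ^ 3 * ‖x - e3‖ ^ 3))]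
    exact integral_congr_ae (Eventually.of_forall hpt)
  rw [key]
  by_cases hI : Integrable Gfun (volume : Measure (ℝ × ℝ × ℝ))
  · rw [Measure.volume_eq_prod] at hI
    rw [Measure.volume_eq_prod, MeasureTheory.integral_prod _ hI]
    have hs : (volume ({0, 1/2, 1} : Set ℝ)) = 0 := by
      have hfin : ({0, 1/2, 1} : Set ℝ).Finite := (Set.finite_singleton _).insert _ |>.insert _
      exact hfin.measure_zero _
    have hae : (fun z : ℝ => ∫ w : ℝ × ℝ, Gfun (z, w)) =ᵐ[volume] Tpw := by
      filter_upwards [measure_eq_zero_iff_ae_notMem.mp hs] with z hz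
      simp only [Set.mem_insert_iff, Set.mem_singleton_iff, not_or] at hz
      obtain ⟨hz0, hzh, hz1⟩ := hz
      exact planar_integral z hz0 hz1 hzh
    rw [integral_congr_ae hae]
    exact Tpw_integral ((hI.integral_prod_left).congr hae)
  · exact integral_undef hI
end
end

section
/- ∫_{ℝ³} (x₁² + x₂²) / (‖x‖³ · ‖x − e₃‖³) dx = 4π, where e₃ = (0,0,1) and x₁, x₂ denote the first two coordinates of x. Consequently the interaction energy (1/(32π²)) ∫_{ℝ³} ⟨e₃ × x, e₃ × (x − e₃)⟩ / (‖x‖³‖x − e₃‖³) dx of two unit vortices at 0 and e₃, both with vorticity e₃, equals 1/(8π). -/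
open MeasureTheory Real
open scoped RealInnerProductSpace

noncomputable section

open Set Filter Topology

section AuxLemmas

private lemma radial_aux' {A B a b : ℝ} (ha : 0 < a) (hb : 0 < b) (hA : A = a^2) (hB : B = b^2)
    (hab : a ≠ b) :
    IntegrableOn (fun r : ℝ => r^3 / (Real.sqrt (r^2+A)^3 * Real.sqrt (r^2+B)^3)) (Ioi 0) ∧
    ∫ r in Ioi (0:ℝ), r^3 / (Real.sqrt (r^2+A)^3 * Real.sqrt (r^2+B)^3) = 1/(a+b)^2 := by
  have hA0 : 0 < A := hA ▸ pow_pos ha 2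
  have hB0 : 0 < B := hB ▸ pow_pos hb 2
  have habne : a - b ≠ 0 := sub_ne_zero.mpr hab
  have habp : a + b ≠ 0 := by positivity
  have hABne : A - B ≠ 0 := by
    rw [hA, hB]
    have : a^2 - b^2 = (a-b)*(a+b) := by ring
    rw [this]; exact mul_ne_zero habne habp
  set c : ℝ := (A+B)/(A-B)^2 with hc
  set d : ℝ := 2*A*B/(A-B)^2 with hd
  set φ : ℝ → ℝ := fun r => (c*r^2+d)/(Real.sqrt (r^2+A) * Real.sqrt (r^2+B)) with hφ
  have sqA : ∀ r : ℝ, (0:ℝ) < r^2 + A := fun r => by positivity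
  have sqB : ∀ r : ℝ, (0:ℝ) < r^2 + B := fun r => by positivity
  -- derivative of φ
  have hderiv : ∀ r : ℝ,
      HasDerivAt φ (r^3 / (Real.sqrt (r^2+A)^3 * Real.sqrt (r^2+B)^3)) r := by
    intro r
    have hu2 : Real.sqrt (r^2+A)^2 = r^2+A := Real.sq_sqrt (sqA r).le
    have hv2 : Real.sqrt (r^2+B)^2 = r^2+B := Real.sq_sqrt (sqB r).le
    have hu0 : (0:ℝ) < Real.sqrt (r^2+A) := Real.sqrt_pos.mpr (sqA r)
    have hv0 : (0:ℝ) < Real.sqrt (r^2+B) := Real.sqrt_pos.mpr (sqB r)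
    have dA : HasDerivAt (fun r : ℝ => r^2 + A) (2*r) r := by
      simpa using (hasDerivAt_pow 2 r).add_const A
    have dB : HasDerivAt (fun r : ℝ => r^2 + B) (2*r) r := by
      simpa using (hasDerivAt_pow 2 r).add_const B
    have dsA : HasDerivAt (fun r : ℝ => Real.sqrt (r^2+A)) (r / Real.sqrt (r^2+A)) r := by
      have := (Real.hasDerivAt_sqrt (sqA r).ne').comp r dA
      refine this.congr_deriv ?_
      field_simp
    have dsB : HasDerivAt (fun r : ℝ => Real.sqrt (r^2+B)) (r / Real.sqrt (r^2+B)) r := by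
      have := (Real.hasDerivAt_sqrt (sqB r).ne').comp r dB
      refine this.congr_deriv ?_
      field_simp
    have dnum : HasDerivAt (fun r : ℝ => c*r^2+d) (c*(2*r)) r := by
      simpa using ((hasDerivAt_pow 2 r).const_mul c).add_const d
    have dden := dsA.mul dsB
    have hden0 : Real.sqrt (r^2+A) * Real.sqrt (r^2+B) ≠ 0 :=
      mul_ne_zero hu0.ne' hv0.ne'
    have := dnum.div dden hden0
    refine this.congr_deriv ?_
    simp only [Pi.mul_apply]
    symm
    generalize hugen : Real.sqrt (r^2+A) = u at hu2 hu0 ⊢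
    generalize hvgen : Real.sqrt (r^2+B) = v at hv2 hv0 ⊢
    have key : c*(2*r)*(u*v) - (c*r^2+d)*(r / u * v + u * (r / v)) =
        (2*c*r*(u^2*v^2) - (c*r^2+d)*(r*v^2+r*u^2))/(u*v) := by
      field_simp
    rw [key, hu2, hv2]
    have num_eq : 2*c*r*((r^2+A)*(r^2+B)) - (c*r^2+d)*(r*(r^2+B)+r*(r^2+A)) = r^3 := by
      rw [hc, hd]; field_simp; ring
    rw [show (2*c*r*((r^2+A)*(r^2+B)) - (c*r^2+d)*(r*(r^2+B)+r*(r^2+A))) = r^3 from num_eq,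
      div_div]
    congr 1
    ring
  -- limit at infinity
  have hlim : Tendsto φ atTop (𝓝 c) := by
    have l2 : Tendsto (fun r : ℝ => d/r^2) atTop (𝓝 0) := by
      simpa using Filter.Tendsto.div_atTop (tendsto_const_nhds (x := d))
        (tendsto_pow_atTop (two_ne_zero))
    have lA : Tendsto (fun r : ℝ => 1 + A/r^2) atTop (𝓝 1) := by
      have : Tendsto (fun r : ℝ => A/r^2) atTop (𝓝 0) := by
        simpa using Filter.Tendsto.div_atTop (tendsto_const_nhds (x := A))
          (tendsto_pow_atTop (two_ne_zero))
      simpa using tendsto_const_nhds.add this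
    have lB : Tendsto (fun r : ℝ => 1 + B/r^2) atTop (𝓝 1) := by
      have : Tendsto (fun r : ℝ => B/r^2) atTop (𝓝 0) := by
        simpa using Filter.Tendsto.div_atTop (tendsto_const_nhds (x := B))
          (tendsto_pow_atTop (two_ne_zero))
      simpa using tendsto_const_nhds.add this
    have lnum : Tendsto (fun r : ℝ => c + d/r^2) atTop (𝓝 c) := by
      simpa using tendsto_const_nhds.add l2
    have lden : Tendsto (fun r : ℝ => Real.sqrt (1+A/r^2) * Real.sqrt (1+B/r^2)) atTop (𝓝 1) := by
      have sA' : Tendsto (fun r : ℝ => Real.sqrt (1+A/r^2)) atTop (𝓝 1) := by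
        have := (Real.continuous_sqrt.tendsto 1).comp lA
        simpa [Function.comp_def] using this
      have sB' : Tendsto (fun r : ℝ => Real.sqrt (1+B/r^2)) atTop (𝓝 1) := by
        have := (Real.continuous_sqrt.tendsto 1).comp lB
        simpa [Function.comp_def] using this
      simpa using sA'.mul sB'
    have lψ : Tendsto (fun r : ℝ => (c + d/r^2) / (Real.sqrt (1+A/r^2) * Real.sqrt (1+B/r^2)))
        atTop (𝓝 c) := by
      simpa [Pi.div_def] using lnum.div lden one_ne_zero
    refine Tendsto.congr' ?_ lψ
    filter_upwards [eventually_gt_atTop (0:ℝ)] with r hr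
    have hr2 : (0:ℝ) < r^2 := by positivity
    have eA : Real.sqrt (r^2+A) = r * Real.sqrt (1+A/r^2) := by
      rw [show r^2+A = r^2*(1+A/r^2) by field_simp, Real.sqrt_mul (sq_nonneg r),
        Real.sqrt_sq hr.le]
    have eB : Real.sqrt (r^2+B) = r * Real.sqrt (1+B/r^2) := by
      rw [show r^2+B = r^2*(1+B/r^2) by field_simp, Real.sqrt_mul (sq_nonneg r),
        Real.sqrt_sq hr.le]
    rw [hφ]
    simp only
    rw [eA, eB]
    have h1 : (0:ℝ) < Real.sqrt (1+A/r^2) := Real.sqrt_pos.mpr (by positivity)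
    have h2 : (0:ℝ) < Real.sqrt (1+B/r^2) := Real.sqrt_pos.mpr (by positivity)
    field_simp
  have hcont : ContinuousWithinAt φ (Ici 0) 0 :=
    (hderiv 0).continuousAt.continuousWithinAt
  have hpos : ∀ r ∈ Ioi (0:ℝ), 0 ≤ r^3 / (Real.sqrt (r^2+A)^3 * Real.sqrt (r^2+B)^3) := by
    intro r hr
    have : (0:ℝ) < r := hr
    positivity
  have hφ0 : φ 0 = d / (a*b) := by
    rw [hφ]
    simp only
    rw [show (0:ℝ)^2 + A = A by ring, show (0:ℝ)^2 + B = B by ring, hA, hB,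
      Real.sqrt_sq ha.le, Real.sqrt_sq hb.le]
    ring_nf
  have hval : c - φ 0 = 1/(a+b)^2 := by
    rw [hφ0, hc, hd, hA, hB]
    have h1 : a^2 - b^2 ≠ 0 := by
      rw [show a^2-b^2 = (a-b)*(a+b) by ring]; exact mul_ne_zero habne habp
    have hab0 : a*b ≠ 0 := by positivity
    field_simp
    ring
  constructor
  · exact integrableOn_Ioi_deriv_of_nonneg hcont (fun x _ => hderiv x) hpos hlim
  · rw [integral_Ioi_of_hasDerivAt_of_nonneg hcont (fun x _ => hderiv x) hpos hlim, hval]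

private lemma slice_aux' {A B a b : ℝ} (ha : 0 < a) (hb : 0 < b) (hA : A = a^2) (hB : B = b^2)
    (hab : a ≠ b) :
    Integrable (fun y : ℝ×ℝ =>
      (y.1^2+y.2^2) / (Real.sqrt (y.1^2+y.2^2+A)^3 * Real.sqrt (y.1^2+y.2^2+B)^3)) ∧
    ∫ y : ℝ×ℝ, (y.1^2+y.2^2) / (Real.sqrt (y.1^2+y.2^2+A)^3 * Real.sqrt (y.1^2+y.2^2+B)^3)
      = (2*π) * (1/(a+b)^2) := by
  set g : ℝ×ℝ → ℝ := fun y =>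
    (y.1^2+y.2^2) / (Real.sqrt (y.1^2+y.2^2+A)^3 * Real.sqrt (y.1^2+y.2^2+B)^3) with hg
  set k : ℝ → ℝ := fun r => r^3 / (Real.sqrt (r^2+A)^3 * Real.sqrt (r^2+B)^3) with hk
  obtain ⟨hkint, hkval⟩ := radial_aux' ha hb hA hB hab
  have hsymm : ∀ p : ℝ×ℝ, g (polarCoord.symm p) = p.1^2 /
      (Real.sqrt (p.1^2+A)^3 * Real.sqrt (p.1^2+B)^3) := by
    intro p
    rw [hg]
    have hps : (polarCoord.symm p) = (p.1 * Real.cos p.2, p.1 * Real.sin p.2) := rfl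
    rw [hps]
    have : (p.1 * Real.cos p.2)^2 + (p.1 * Real.sin p.2)^2 = p.1^2 := by
      have := Real.sin_sq_add_cos_sq p.2
      nlinarith [this]
    simp only
    rw [this]
  have hkey : ∀ p : ℝ×ℝ, p.1 • g (polarCoord.symm p) = k p.1 * (fun _ : ℝ => (1:ℝ)) p.2 := by
    intro p
    rw [hsymm p, hk]
    simp only [smul_eq_mul, mul_one]
    ring
  have hIoo : ∫ θ in Ioo (-π) π, (1:ℝ) = 2*π := by
    simp [Real.volume_Ioo]
    rw [max_eq_left (by positivity)]
    ring
  constructor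
  · set Bm : ℝ × ℝ → (ℝ × ℝ) →L[ℝ] (ℝ × ℝ) := fun p =>
      LinearMap.toContinuousLinearMap (Matrix.toLin (Module.Basis.finTwoProd ℝ) (Module.Basis.finTwoProd ℝ)
        !![Real.cos p.2, -p.1 * Real.sin p.2; Real.sin p.2, p.1 * Real.cos p.2]) with hBm
    have hBdet : ∀ p : ℝ×ℝ, (Bm p).det = p.1 := by
      intro p
      conv_rhs => rw [← one_mul p.1, ← Real.cos_sq_add_sin_sq p.2]
      simp only [hBm, neg_mul, LinearMap.det_toContinuousLinearMap, LinearMap.det_toLin,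
        Matrix.det_fin_two_of, sub_neg_eq_add]
      ring
    have hiff := integrableOn_image_iff_integrableOn_abs_det_fderiv_smul volume
      polarCoord.symm.open_source.measurableSet
      (fun p _ => (hasFDerivAt_polarCoord_symm p).hasFDerivWithinAt)
      polarCoord.symm.injOn g
    have himage : polarCoord.symm '' polarCoord.symm.source = polarCoord.source := by
      rw [polarCoord.symm.image_source_eq_target]
      rfl
    rw [himage] at hiff
    have hsrc : polarCoord.symm.source = Ioi (0:ℝ) ×ˢ Ioo (-π) π := by
      rw [OpenPartialHomeomorph.symm_source, polarCoord_target]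
    have hright : IntegrableOn (fun p : ℝ×ℝ => |(Bm p).det| • g (polarCoord.symm p))
        polarCoord.symm.source := by
      rw [hsrc]
      have h1 : Integrable (fun r : ℝ => |r| * (r^2 / (Real.sqrt (r^2+A)^3 * Real.sqrt (r^2+B)^3)))
          (volume.restrict (Ioi 0)) := by
        apply hkint.congr
        refine (ae_restrict_iff' measurableSet_Ioi).mpr (Filter.Eventually.of_forall ?_)
        intro r hr
        show r ^ 3 / (Real.sqrt (r^2+A)^3 * Real.sqrt (r^2+B)^3)
          = |r| * (r^2 / (Real.sqrt (r^2+A)^3 * Real.sqrt (r^2+B)^3))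
        rw [abs_of_pos hr]
        ring
      have h2 : Integrable (fun _ : ℝ => (1:ℝ)) (volume.restrict (Ioo (-π) π)) := by
        rw [← IntegrableOn]
        rw [integrableOn_const_iff]
        right
        rw [Real.volume_Ioo]
        exact ENNReal.ofReal_lt_top
      have h3 := h1.mul_prod h2
      rw [Measure.prod_restrict, ← Measure.volume_eq_prod] at h3
      apply h3.congr
      refine Filter.Eventually.of_forall ?_
      intro p
      simp only [smul_eq_mul, hBdet p, hsymm p, mul_one]
    rw [← integrableOn_univ]
    exact (hiff.mpr hright).congr_set_ae polarCoord_source_ae_eq_univ.symm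
  · rw [← integral_comp_polarCoord_symm g]
    rw [polarCoord_target]
    calc ∫ p in Ioi 0 ×ˢ Ioo (-π) π, p.1 • g (polarCoord.symm p)
        = ∫ p in Ioi 0 ×ˢ Ioo (-π) π, k p.1 * (fun _ : ℝ => (1:ℝ)) p.2 := by
          exact integral_congr_ae (Filter.Eventually.of_forall (fun p => hkey p))
      _ = (∫ r in Ioi (0:ℝ), k r) * ∫ θ in Ioo (-π) π, (1:ℝ) := by
          exact setIntegral_prod_mul k (fun _ => (1:ℝ)) _ _
      _ = (2*π) * (1/(a+b)^2) := by rw [hkval, hIoo]; ring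

private lemma inv_sq_deriv' (e : ℝ) (z : ℝ) (hz : 2*z+e ≠ 0) :
    HasDerivAt (fun z : ℝ => -π/(2*z+e)) (2*π/(2*z+e)^2) z := by
  have h1 : HasDerivAt (fun z : ℝ => 2*z+e) 2 z := by
    simpa using ((hasDerivAt_id z).const_mul 2).add_const e
  have h2 := (h1.inv hz).const_mul (-π)
  refine h2.congr_deriv ?_
  field_simp

private lemma outer_int' :
    Integrable (fun z : ℝ => (2*π) * (1/((|z|+|z-1|)^2))) ∧
    ∫ z : ℝ, (2*π) * (1/((|z|+|z-1|)^2)) = 4*π := by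
  set W : ℝ → ℝ := fun z => (2*π) * (1/((|z|+|z-1|)^2)) with hW
  -- piece on Ioi 1
  have hIoi1 : IntegrableOn W (Ioi 1) ∧ ∫ z in Ioi (1:ℝ), W z = π := by
    have hcong : ∀ z ∈ Ioi (1:ℝ), W z = 2*π/(2*z+(-1))^2 := by
      intro z hz
      have h1 : (0:ℝ) < z := lt_trans one_pos hz
      have h2 : (0:ℝ) ≤ z - 1 := by simp at hz; linarith
      rw [hW]
      simp only
      rw [abs_of_pos h1, abs_of_nonneg h2]
      ring_nf
    have hd : ∀ z ∈ Ici (1:ℝ), HasDerivAt (fun z : ℝ => -π/(2*z+(-1)))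
        (2*π/(2*z+(-1))^2) z := by
      intro z hz
      have : (1:ℝ) ≤ z := hz
      exact inv_sq_deriv' (-1) z (by linarith)
    have hpos : ∀ z ∈ Ioi (1:ℝ), (0:ℝ) ≤ 2*π/(2*z+(-1))^2 := by
      intro z hz
      have : (1:ℝ) < z := hz
      have : (0:ℝ) < 2*z + (-1) := by linarith
      positivity
    have hlim : Tendsto (fun z : ℝ => -π/(2*z+(-1))) atTop (𝓝 0) := by
      apply Filter.Tendsto.div_atTop tendsto_const_nhds
      apply Filter.tendsto_atTop_add_const_right
      exact (tendsto_id.const_mul_atTop two_pos)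
    constructor
    · apply (integrableOn_Ioi_deriv_of_nonneg' hd hpos hlim).congr_fun
        (fun z hz => (hcong z hz).symm) measurableSet_Ioi
    · rw [setIntegral_congr_fun measurableSet_Ioi hcong,
        integral_Ioi_of_hasDerivAt_of_nonneg' hd hpos hlim]
      norm_num
  -- piece on Ioc 0 1
  have hIoc : IntegrableOn W (Ioc 0 1) ∧ ∫ z in Ioc (0:ℝ) 1, W z = 2*π := by
    have hcong : ∀ z ∈ Ioc (0:ℝ) 1, W z = 2*π := by
      intro z hz
      obtain ⟨h1, h2⟩ := hz
      rw [hW]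
      simp only
      rw [abs_of_pos h1, abs_of_nonpos (by linarith : z - 1 ≤ 0)]
      have : z + -(z-1) = 1 := by ring
      rw [this]
      norm_num
    constructor
    · apply ((integrableOn_const_iff (C := 2*π)).mpr ?_).congr_fun
        (fun z hz => (hcong z hz).symm) measurableSet_Ioc
      right
      rw [Real.volume_Ioc]
      exact ENNReal.ofReal_lt_top
    · rw [setIntegral_congr_fun measurableSet_Ioc hcong]
      simp [Real.volume_Ioc]
  -- piece on Iic 0
  have hneg : ∀ z ∈ Ioi (0:ℝ), W (-z) = 2*π/(2*z+1)^2 := by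
    intro z hz
    have h1 : (0:ℝ) < z := hz
    rw [hW]
    simp only
    rw [abs_of_neg (by linarith : -z < 0), abs_of_neg (by linarith : -z - 1 < 0)]
    have : -(-z) + -(-z-1) = 2*z+1 := by ring
    rw [this]
    ring
  have hdneg : ∀ z ∈ Ici (0:ℝ), HasDerivAt (fun z : ℝ => -π/(2*z+1))
      (2*π/(2*z+1)^2) z := by
    intro z hz
    have : (0:ℝ) ≤ z := hz
    exact inv_sq_deriv' 1 z (by linarith)
  have hposneg : ∀ z ∈ Ioi (0:ℝ), (0:ℝ) ≤ 2*π/(2*z+1)^2 := by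
    intro z hz
    have : (0:ℝ) < z := hz
    positivity
  have hlimneg : Tendsto (fun z : ℝ => -π/(2*z+1)) atTop (𝓝 0) := by
    apply Filter.Tendsto.div_atTop tendsto_const_nhds
    apply Filter.tendsto_atTop_add_const_right
    exact (tendsto_id.const_mul_atTop two_pos)
  have hWnegIoi : IntegrableOn (fun z => W (-z)) (Ioi 0) ∧
      ∫ z in Ioi (0:ℝ), W (-z) = π := by
    constructor
    · apply (integrableOn_Ioi_deriv_of_nonneg' hdneg hposneg hlimneg).congr_fun
        (fun z hz => (hneg z hz).symm) measurableSet_Ioi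
    · rw [setIntegral_congr_fun measurableSet_Ioi hneg,
        integral_Ioi_of_hasDerivAt_of_nonneg' hdneg hposneg hlimneg]
      norm_num
  have hIic : IntegrableOn W (Iic 0) ∧ ∫ z in Iic (0:ℝ), W z = π := by
    have hmp : MeasurePreserving (fun x : ℝ => -x)
        (volume.restrict (Ici (0:ℝ))) (volume.restrict (Iic (0:ℝ))) := by
      constructor
      · exact measurable_neg
      · have hpre : (fun x : ℝ => -x) ⁻¹' (Iic 0) = Ici 0 := by
          ext x; simp
        rw [show volume.restrict (Ici (0:ℝ))
            = volume.restrict ((fun x : ℝ => -x) ⁻¹' (Iic 0)) by rw [hpre]]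
        rw [← Measure.restrict_map measurable_neg measurableSet_Iic]
        rw [show Measure.map (fun x : ℝ => -x) volume = volume from
          Measure.map_neg_eq_self volume]
    have hemb : MeasurableEmbedding (fun x : ℝ => -x) :=
      (MeasurableEquiv.neg ℝ).measurableEmbedding
    constructor
    · have h2 : Integrable (W ∘ fun x : ℝ => -x) (volume.restrict (Ici (0:ℝ))) := by
        rw [← IntegrableOn, integrableOn_Ici_iff_integrableOn_Ioi]
        exact hWnegIoi.1
      exact (hmp.integrable_comp_emb hemb).mp h2
    · rw [show Iic (0:ℝ) = Iic (-(0:ℝ)) by norm_num, ← integral_comp_neg_Ioi]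
      exact hWnegIoi.2
  -- assemble
  have hsplit : (Iic (0:ℝ)) ∪ (Ioc (0:ℝ) 1 ∪ Ioi (1:ℝ)) = univ := by
    ext z
    simp only [mem_union, mem_Iic, mem_Ioc, mem_Ioi, mem_univ, iff_true]
    by_cases h1 : z ≤ 0
    · exact Or.inl h1
    · by_cases h2 : z ≤ 1
      · exact Or.inr (Or.inl ⟨lt_of_not_ge h1, h2⟩)
      · exact Or.inr (Or.inr (lt_of_not_ge h2))
  have hdisj2 : Disjoint (Ioc (0:ℝ) 1) (Ioi 1) := by
    rw [Set.disjoint_left]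
    intro z hz hz'
    exact absurd hz.2 (not_le.mpr hz')
  have hdisj1 : Disjoint (Iic (0:ℝ)) (Ioc 0 1 ∪ Ioi 1) := by
    rw [Set.disjoint_left]
    intro z hz hz'
    simp only [mem_Iic] at hz
    rcases hz' with h | h
    · exact absurd h.1 (not_lt.mpr hz)
    · exact absurd (lt_trans one_pos h) (not_lt.mpr hz)
  have hint23 : IntegrableOn W (Ioc 0 1 ∪ Ioi 1) := hIoc.1.union hIoi1.1
  have hintall : Integrable W := by
    rw [← integrableOn_univ, ← hsplit]
    exact hIic.1.union hint23
  refine ⟨hintall, ?_⟩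
  have e1 : ∫ z, W z = ∫ z in (Iic (0:ℝ)) ∪ (Ioc (0:ℝ) 1 ∪ Ioi (1:ℝ)), W z := by
    rw [hsplit, setIntegral_univ]
  rw [e1, setIntegral_union hdisj1 (measurableSet_Ioc.union measurableSet_Ioi) hIic.1 hint23,
    setIntegral_union hdisj2 measurableSet_Ioi hIoc.1 hIoi1.1, hIic.2, hIoc.2, hIoi1.2]
  ring

end AuxLemmas

private def ψmap : ℝ × (ℝ × ℝ) ≃ᵐ EuclideanSpace ℝ (Fin 3) :=
  ((MeasurableEquiv.refl ℝ).prodCongr (MeasurableEquiv.finTwoArrow (α := ℝ)).symm).trans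
    (((MeasurableEquiv.piFinSuccAbove (fun _ : Fin 3 => ℝ) 2).symm).trans
      (MeasurableEquiv.toLp 2 (Fin 3 → ℝ)))

private lemma ψmp : MeasurePreserving ψmap volume volume := by
  have m1 : MeasurePreserving ((MeasurableEquiv.refl ℝ).prodCongr
      (MeasurableEquiv.finTwoArrow (α := ℝ)).symm) volume volume := by
    have := (MeasurePreserving.id (volume : Measure ℝ)).prod
      ((volume_preserving_finTwoArrow ℝ).symm)
    rw [← Measure.volume_eq_prod, ← Measure.volume_eq_prod] at this
    exact this
  have m2 : MeasurePreserving ((MeasurableEquiv.piFinSuccAbove (fun _ : Fin 3 => ℝ) 2).symm)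
      volume volume :=
    (volume_preserving_piFinSuccAbove (fun _ : Fin 3 => ℝ) 2).symm
  have m3 : MeasurePreserving (MeasurableEquiv.toLp 2 (Fin 3 → ℝ))
      volume volume := (EuclideanSpace.volume_preserving_symm_measurableEquiv_toLp (Fin 3)).symm
  exact (m3.comp m2).comp m1

private lemma ψcoords (p : ℝ × (ℝ × ℝ)) :
    ψmap p 0 = p.2.1 ∧ ψmap p 1 = p.2.2 ∧ ψmap p 2 = p.1 := by
  have base : ∀ i : Fin 3, ψmap p i =
      @Fin.insertNth 2 (fun _ => ℝ) (2 : Fin 3) p.1 (fun j : Fin 2 => ![p.2.1, p.2.2] j) i := by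
    intro i
    rfl
  have h0 : (0 : Fin 3) = (2 : Fin 3).succAbove 0 := by decide
  have h1 : (1 : Fin 3) = (2 : Fin 3).succAbove 1 := by decide
  refine ⟨?_, ?_, ?_⟩
  · rw [base 0, h0, Fin.insertNth_apply_succAbove]; simp
  · rw [base 1, h1, Fin.insertNth_apply_succAbove]; simp
  · rw [base 2, Fin.insertNth_apply_same]

private lemma norm_coords (x : EuclideanSpace ℝ (Fin 3)) :
    ‖x‖ = Real.sqrt ((x 0)^2 + (x 1)^2 + (x 2)^2) := by
  rw [EuclideanSpace.norm_eq, Fin.sum_univ_three]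
  simp [Real.norm_eq_abs, sq_abs]

private lemma e3_coords : e3 0 = 0 ∧ e3 1 = 0 ∧ e3 2 = 1 := ⟨rfl, rfl, rfl⟩

/-- `∫_{ℝ³} (x₁² + x₂²)/(‖x‖³‖x−e₃‖³) dx = 4π`, and consequently the interaction energy
of two unit vortices at `0` and `e₃`, both with vorticity `e₃`, equals `1/(8π)`. -/
theorem integral_radial_and_axial_interaction_energy :
    (∫ x : EuclideanSpace ℝ (Fin 3),
        ((x 0) ^ 2 + (x 1) ^ 2) / (‖x‖ ^ 3 * ‖x - e3‖ ^ 3) = 4 * π) ∧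
    (1 / (32 * π ^ 2)) *
        ∫ x : EuclideanSpace ℝ (Fin 3),
          ⟪cross e3 x, cross e3 (x - e3)⟫ / (‖x‖ ^ 3 * ‖x - e3‖ ^ 3) = 1 / (8 * π) := by
  set f : EuclideanSpace ℝ (Fin 3) → ℝ := fun x =>
    ((x 0) ^ 2 + (x 1) ^ 2) / (‖x‖ ^ 3 * ‖x - e3‖ ^ 3) with hf
  set F : ℝ × (ℝ × ℝ) → ℝ := fun p =>
    (p.2.1^2+p.2.2^2) / (Real.sqrt (p.2.1^2+p.2.2^2+p.1^2)^3
      * Real.sqrt (p.2.1^2+p.2.2^2+(p.1-1)^2)^3) with hF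
  set W : ℝ → ℝ := fun z => (2*π) * (1/((|z|+|z-1|)^2)) with hW
  -- pointwise identification
  have heval : ∀ p : ℝ × (ℝ × ℝ), f (ψmap p) = F p := by
    intro p
    obtain ⟨h0, h1, h2⟩ := ψcoords p
    have hsub : ∀ i : Fin 3, (ψmap p - e3) i = ψmap p i - e3 i := fun i => rfl
    rw [hf, hF]
    simp only
    rw [h0, h1, norm_coords, norm_coords (ψmap p - e3), hsub 0, hsub 1, hsub 2,
      h0, h1, h2, e3_coords.1, e3_coords.2.1, e3_coords.2.2]
    norm_num
  -- step 1: transfer to ℝ × ℝ × ℝ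
  have hstep1 : ∫ x : EuclideanSpace ℝ (Fin 3), f x = ∫ p : ℝ × (ℝ × ℝ), F p := by
    rw [← ψmp.integral_comp ψmap.measurableEmbedding f]
    exact integral_congr_ae (Filter.Eventually.of_forall heval)
  -- bad set
  have hNzero : volume ({0, 1/2, 1} : Set ℝ) = 0 :=
    (Set.toFinite _).measure_zero volume
  have hae : ∀ᵐ z : ℝ, z ∉ ({0, 1/2, 1} : Set ℝ) := by
    rw [ae_iff]
    have : {z : ℝ | ¬ z ∉ ({0, 1/2, 1} : Set ℝ)} = ({0, 1/2, 1} : Set ℝ) := by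
      ext z; simp only [mem_setOf_eq, not_not]
    rw [this]
    exact hNzero
  -- slice facts for good z
  have hgood : ∀ z : ℝ, z ∉ ({0, 1/2, 1} : Set ℝ) →
      Integrable (fun y : ℝ × ℝ => F (z, y)) ∧ (∫ y : ℝ × ℝ, F (z, y)) = W z := by
    intro z hz
    simp only [mem_insert_iff, mem_singleton_iff, not_or] at hz
    obtain ⟨hz0, hzhalf, hz1⟩ := hz
    have ha : 0 < |z| := abs_pos.mpr hz0
    have hb : 0 < |z-1| := abs_pos.mpr (sub_ne_zero.mpr hz1)
    have hab : |z| ≠ |z-1| := by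
      intro h
      rcases abs_eq_abs.mp h with h' | h'
      · linarith
      · apply hzhalf; linarith
    have hA : z^2 = |z|^2 := (sq_abs z).symm
    have hB : (z-1)^2 = |z-1|^2 := (sq_abs (z-1)).symm
    obtain ⟨hint, hval⟩ := slice_aux' ha hb hA hB hab
    constructor
    · exact hint
    · rw [hW]
      simp only
      convert hval using 2
  -- measurability
  have hFmeas : AEStronglyMeasurable F ((volume : Measure ℝ).prod (volume : Measure (ℝ × ℝ))) := by
    have : Measurable F := by
      apply Measurable.div
      · fun_prop
      · apply Measurable.mul
        · exact ((Real.continuous_sqrt.comp (by fun_prop)).pow 3).measurable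
        · exact ((Real.continuous_sqrt.comp (by fun_prop)).pow 3).measurable
    exact this.aestronglyMeasurable
  have hFnonneg : ∀ p : ℝ × (ℝ × ℝ), 0 ≤ F p := by
    intro p
    rw [hF]
    positivity
  -- integrability of F
  have hFint : Integrable F ((volume : Measure ℝ).prod (volume : Measure (ℝ × ℝ))) := by
    rw [integrable_prod_iff hFmeas]
    constructor
    · filter_upwards [hae] with z hz
      exact (hgood z hz).1
    · apply (outer_int'.1).congr
      filter_upwards [hae] with z hz
      have : (fun y : ℝ × ℝ => ‖F (z, y)‖) = fun y => F (z, y) := by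
        funext y
        rw [Real.norm_eq_abs, abs_of_nonneg (hFnonneg (z, y))]
      rw [this, (hgood z hz).2, hW]
  -- main computation
  have hmain : ∫ x : EuclideanSpace ℝ (Fin 3), f x = 4 * π := by
    rw [hstep1]
    rw [show ((volume : Measure (ℝ × (ℝ × ℝ)))) = ((volume : Measure ℝ).prod
      (volume : Measure (ℝ × ℝ))) from Measure.volume_eq_prod _ _]
    rw [MeasureTheory.integral_prod F hFint]
    have : ∫ z : ℝ, ∫ y : ℝ × ℝ, F (z, y) = ∫ z : ℝ, W z := by
      apply integral_congr_ae
      filter_upwards [hae] with z hz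
      exact (hgood z hz).2
    rw [this]
    exact outer_int'.2
  -- inner product identity
  have hinner : ∀ x : EuclideanSpace ℝ (Fin 3),
      ⟪cross e3 x, cross e3 (x - e3)⟫ = (x 0)^2 + (x 1)^2 := by
    intro x
    have hsub : ∀ i : Fin 3, (x - e3) i = x i - e3 i := fun i => rfl
    rw [PiLp.inner_apply, Fin.sum_univ_three]
    have c0 : ∀ v : EuclideanSpace ℝ (Fin 3), cross e3 v 0 = e3 1 * v 2 - e3 2 * v 1 := fun v => rfl
    have c1 : ∀ v : EuclideanSpace ℝ (Fin 3), cross e3 v 1 = e3 2 * v 0 - e3 0 * v 2 := fun v => rfl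
    have c2 : ∀ v : EuclideanSpace ℝ (Fin 3), cross e3 v 2 = e3 0 * v 1 - e3 1 * v 0 := fun v => rfl
    rw [c0, c1, c2, c0, c1, c2, hsub 0, hsub 1, hsub 2,
      e3_coords.1, e3_coords.2.1, e3_coords.2.2]
    simp only [RCLike.inner_apply, conj_trivial]
    ring
  constructor
  · exact hmain
  · have : (fun x : EuclideanSpace ℝ (Fin 3) =>
        ⟪cross e3 x, cross e3 (x - e3)⟫ / (‖x‖ ^ 3 * ‖x - e3‖ ^ 3)) = f := by
      funext x
      rw [hinner x, hf]
    rw [this, hmain]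
    have hπ : π ≠ 0 := pi_ne_zero
    field_simp
    ring
end
end

section
/- Let e₁ = (1,0,0) and e₃ = (0,0,1), and let ωb ∈ ℝ³ satisfy ⟨ωb, e₁⟩ = 0. Then ∫_{ℝ³} ⟨ωb × x, e₁ × (x − e₃)⟩ / (‖x‖³ · ‖x − e₃‖³) dx = 0. That is, the interaction energy of a vortex at the origin with vorticity having no x-component and a vortex at e₃ with vorticity e₁ vanishes. -/
open MeasureTheory Real
open scoped RealInnerProductSpace

noncomputable section

/-- The first standard basis vector `e₁ = (1,0,0)`. -/
def e1 : EuclideanSpace ℝ (Fin 3) := (WithLp.equiv 2 (Fin 3 → ℝ)).symm ![1, 0, 0]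

/-- Reflection negating the first coordinate. -/
def refl1 : EuclideanSpace ℝ (Fin 3) ≃ₗᵢ[ℝ] EuclideanSpace ℝ (Fin 3) :=
{ toFun := fun x => (WithLp.equiv 2 (Fin 3 → ℝ)).symm ![-x 0, x 1, x 2]
  invFun := fun x => (WithLp.equiv 2 (Fin 3 → ℝ)).symm ![-x 0, x 1, x 2]
  map_add' := by
    intro x y; ext i; fin_cases i <;>
      simp [WithLp.equiv_symm_apply, PiLp.toLp_apply] <;> ring
  map_smul' := by
    intro c x; ext i; fin_cases i <;>
      simp [WithLp.equiv_symm_apply, PiLp.toLp_apply] <;> ring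
  left_inv := by
    intro x; ext i; fin_cases i <;> simp [WithLp.equiv_symm_apply, PiLp.toLp_apply]
  right_inv := by
    intro x; ext i; fin_cases i <;> simp [WithLp.equiv_symm_apply, PiLp.toLp_apply]
  norm_map' := by
    intro x
    simp [EuclideanSpace.norm_eq, Fin.sum_univ_three, WithLp.equiv_symm_apply, PiLp.toLp_apply] }

/-- The interaction energy of a vortex at the origin whose vorticity has no
`x`-component with a vortex at `e₃` of vorticity `e₁` vanishes. -/
theorem interaction_energy_orthogonal_vanishes (ωb : EuclideanSpace ℝ (Fin 3))
    (hωb : ⟪ωb, e1⟫ = 0) :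
    ∫ x : EuclideanSpace ℝ (Fin 3),
      ⟪cross ωb x, cross e1 (x - e3)⟫ / (‖x‖ ^ 3 * ‖x - e3‖ ^ 3) = 0 := by
  have hωb0 : ωb 0 = 0 := by
    simpa [e1, PiLp.inner_apply, Fin.sum_univ_three, WithLp.equiv_symm_apply, PiLp.toLp_apply] using hωb
  set f : EuclideanSpace ℝ (Fin 3) → ℝ := fun x =>
    ⟪cross ωb x, cross e1 (x - e3)⟫ / (‖x‖ ^ 3 * ‖x - e3‖ ^ 3) with hf
  have hsub : ∀ x : EuclideanSpace ℝ (Fin 3), refl1 x - e3 = refl1 (x - e3) := by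
    intro x; ext i; fin_cases i <;>
      simp [refl1, e3, WithLp.equiv_symm_apply, PiLp.toLp_apply] <;> ring
  have key : ∀ x, f (refl1 x) = - f x := by
    intro x
    have hn1 : ‖(refl1 x : EuclideanSpace ℝ (Fin 3))‖ = ‖x‖ := refl1.norm_map x
    have hn2 : ‖(refl1 x : EuclideanSpace ℝ (Fin 3)) - e3‖ = ‖x - e3‖ := by
      rw [hsub]; exact refl1.norm_map (x - e3)
    have hnum : ⟪cross ωb (refl1 x), cross e1 (refl1 x - e3)⟫ =
        - ⟪cross ωb x, cross e1 (x - e3)⟫ := by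
      simp only [hsub]
      simp [cross, e1, e3, refl1, PiLp.inner_apply, Fin.sum_univ_three,
        WithLp.equiv_symm_apply, PiLp.toLp_apply, hωb0, PiLp.sub_apply]
      ring
    simp only [hf, hnum, hn1, hn2, neg_div]
  have hint : ∫ x, f (refl1 x) = ∫ x, f x :=
    refl1.measurePreserving.integral_comp refl1.toHomeomorph.measurableEmbedding f
  have : ∫ x, f x = - ∫ x, f x := by
    calc ∫ x, f x = ∫ x, f (refl1 x) := hint.symm
      _ = ∫ x, - f x := by simp only [key]
      _ = - ∫ x, f x := integral_neg f
  linarith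
end
end

section
/- For arbitrary vectors A, C, α, β, γ ∈ ℝ³, the following three quantities are equal: (i) ⟨A × α, γ⟩·⟨C, β⟩ + ⟨C × γ, α⟩·⟨A, β⟩; (ii) ⟨A × α, C⟩·⟨γ, β⟩ + ⟨C × γ, A⟩·⟨α, β⟩; (iii) ⟨β, (α × γ) × (C × A)⟩. -/
open MeasureTheory Real
open scoped RealInnerProductSpace

noncomputable section

/-- The five-vector identity underlying the reciprocity of interaction energy flow:
`⟨A×α,γ⟩⟨C,β⟩ + ⟨C×γ,α⟩⟨A,β⟩ = ⟨A×α,C⟩⟨γ,β⟩ + ⟨C×γ,A⟩⟨α,β⟩ = ⟨β,(α×γ)×(C×A)⟩`. -/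
theorem five_vector_identity (A C α β γ : EuclideanSpace ℝ (Fin 3)) :
    ⟪cross A α, γ⟫ * ⟪C, β⟫ + ⟪cross C γ, α⟫ * ⟪A, β⟫ =
        ⟪cross A α, C⟫ * ⟪γ, β⟫ + ⟪cross C γ, A⟫ * ⟪α, β⟫ ∧
      ⟪cross A α, γ⟫ * ⟪C, β⟫ + ⟪cross C γ, α⟫ * ⟪A, β⟫ =
        ⟪β, cross (cross α γ) (cross C A)⟫ := by
  constructor <;>
  · simp only [cross, PiLp.inner_apply, RCLike.inner_apply, conj_trivial,
      Fin.sum_univ_three, WithLp.equiv_symm_apply, WithLp.ofLp_toLp, Matrix.cons_val_zero,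
      Matrix.cons_val_one, Matrix.head_cons, Matrix.cons_val_two, Matrix.tail_cons]
    ring
end
end

section
/- Let c ∈ ℝ³, w ∈ ℝ³, and let g : ℝ³ → ℝ³ be defined by g(b) := (⟨b − c, w⟩ / ‖b − c‖³) · (b − c). Then for every b ≠ c and every y ∈ ℝ³, g is differentiable at b and its Fréchet derivative at b applied to y equals [ ⟨b − c, w⟩·‖b − c‖²·y + ( ⟨y, w⟩·‖b − c‖² − 3·⟨b − c, y⟩·⟨b − c, w⟩ )·(b − c) ] / ‖b − c‖⁵. -/
open MeasureTheory Real
open scoped RealInnerProductSpace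

noncomputable section

lemma hasFDerivAt_norm_of_ne {E : Type*} [NormedAddCommGroup E] [InnerProductSpace ℝ E]
    {x : E} (hx : x ≠ 0) :
    HasFDerivAt (fun y : E => ‖y‖) (‖x‖⁻¹ • innerSL ℝ x) x := by
  have hr : ‖x‖ ≠ 0 := norm_ne_zero_iff.mpr hx
  have h2 : HasFDerivAt (fun y : E => ‖y‖ ^ 2) (2 • innerSL ℝ x) x :=
    (hasStrictFDerivAt_norm_sq x).hasFDerivAt
  have hs : HasDerivAt Real.sqrt (1 / (2 * Real.sqrt (‖x‖ ^ 2))) (‖x‖ ^ 2) :=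
    Real.hasDerivAt_sqrt (pow_ne_zero 2 hr)
  have h := hs.comp_hasFDerivAt x h2
  have hfun : (Real.sqrt ∘ fun y : E => ‖y‖ ^ 2) = fun y : E => ‖y‖ := by
    funext y
    simp [Function.comp, Real.sqrt_sq (norm_nonneg y)]
  rw [hfun] at h
  have heq : (1 / (2 * Real.sqrt (‖x‖ ^ 2))) • ((2 : ℕ) • innerSL ℝ x)
      = ‖x‖⁻¹ • innerSL ℝ x := by
    ext y
    rw [Real.sqrt_sq (norm_nonneg x)]
    simp only [ContinuousLinearMap.smul_apply, innerSL_apply_apply, smul_eq_mul, nsmul_eq_mul,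
      Nat.cast_ofNat]
    field_simp
  rwa [heq] at h

/-- The map `g(b) = (⟨b − c, w⟩/‖b − c‖³)·(b − c)` (Equation 19 of the paper). -/
def g (c w b : EuclideanSpace ℝ (Fin 3)) : EuclideanSpace ℝ (Fin 3) :=
  (⟪b - c, w⟫ / ‖b - c‖ ^ 3) • (b - c)

/-- The Jacobian computation (Equation 19): `g` is differentiable away from `c`,
with the stated explicit Fréchet derivative. -/
theorem g_fderiv (c w : EuclideanSpace ℝ (Fin 3)) (b : EuclideanSpace ℝ (Fin 3))
    (hbc : b ≠ c) (y : EuclideanSpace ℝ (Fin 3)) :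
    DifferentiableAt ℝ (g c w) b ∧
      fderiv ℝ (g c w) b y =
        (‖b - c‖ ^ 5)⁻¹ •
          ((⟪b - c, w⟫ * ‖b - c‖ ^ 2) • y +
            (⟪y, w⟫ * ‖b - c‖ ^ 2 - 3 * ⟪b - c, y⟫ * ⟪b - c, w⟫) • (b - c)) := by
  have hu : b - c ≠ 0 := sub_ne_zero.mpr hbc
  have hr : ‖b - c‖ ≠ 0 := norm_ne_zero_iff.mpr hu
  have hsub : HasFDerivAt (fun x : EuclideanSpace ℝ (Fin 3) => x - c) (ContinuousLinearMap.id ℝ (EuclideanSpace ℝ (Fin 3))) b :=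
    (hasFDerivAt_id b).sub_const c
  have hnorm : HasFDerivAt (fun x : EuclideanSpace ℝ (Fin 3) => ‖x - c‖)
      ((‖b - c‖⁻¹ • innerSL ℝ (b - c)).comp (ContinuousLinearMap.id ℝ (EuclideanSpace ℝ (Fin 3)))) b :=
    (hasFDerivAt_norm_of_ne hu).comp b hsub
  have hinv := (hasDerivAt_pow 3 (‖b - c‖)).inv (pow_ne_zero 3 hr)
  have hd : HasFDerivAt (fun x : EuclideanSpace ℝ (Fin 3) => (‖x - c‖ ^ 3)⁻¹) _ b := hinv.comp_hasFDerivAt (h₂ := (fun x : ℝ => x ^ 3)⁻¹) (f := fun x => ‖x - c‖) b hnorm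
  have hn : HasFDerivAt (fun x : EuclideanSpace ℝ (Fin 3) => ⟪x - c, w⟫) _ b := hsub.inner ℝ (hasFDerivAt_const w b)
  have hs := hn.mul hd
  have hg' : HasFDerivAt (fun x : EuclideanSpace ℝ (Fin 3) => (⟪x - c, w⟫ * (‖x - c‖ ^ 3)⁻¹) • (x - c)) _ b :=
    hs.smul hsub
  have hgeq : g c w = fun x : EuclideanSpace ℝ (Fin 3) => (⟪x - c, w⟫ * (‖x - c‖ ^ 3)⁻¹) • (x - c) := by
    funext x
    rw [g, div_eq_mul_inv]
  rw [hgeq]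
  refine ⟨hg'.differentiableAt, ?_⟩
  rw [hg'.fderiv]
  simp only [ContinuousLinearMap.add_apply, ContinuousLinearMap.smul_apply,
    ContinuousLinearMap.smulRight_apply, ContinuousLinearMap.comp_apply,
    ContinuousLinearMap.id_apply, innerSL_apply_apply, smul_eq_mul,
    fderivInnerCLM_apply, ContinuousLinearMap.prod_apply, ContinuousLinearMap.coe_zero,
    Pi.zero_apply, inner_zero_right, add_zero, zero_add]
  simp only [ContinuousLinearMap.zero_apply, inner_zero_right, zero_add]
  norm_num
  simp only [inner_sub_left]
  match_scalars <;> field_simp <;> ring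
end
end

section
/- Let c ∈ ℝ³, w ∈ ℝ³, and let g : ℝ³ → ℝ³ be defined by g(b) := (⟨b − c, w⟩ / ‖b − c‖³) · (b − c). Then for every b ≠ c and all y, z ∈ ℝ³, ⟨z, Dg(b)(y)⟩ − ⟨y, Dg(b)(z)⟩ = ( ⟨y, w⟩·⟨b − c, z⟩ − ⟨z, w⟩·⟨b − c, y⟩ ) / ‖b − c‖³, where Dg(b) denotes the Fréchet derivative of g at b. In particular, the Jacobian of g is symmetric except for this explicit antisymmetric part. -/
open MeasureTheory Real
open scoped RealInnerProductSpace

noncomputable section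

/-- The Jacobian of `g` is symmetric except for an explicit antisymmetric part:
`⟨z, Dg(b)y⟩ − ⟨y, Dg(b)z⟩ = (⟨y,w⟩⟨b−c,z⟩ − ⟨z,w⟩⟨b−c,y⟩)/‖b−c‖³`. -/
theorem g_jacobian_antisymmetric_part (c w : EuclideanSpace ℝ (Fin 3))
    (b : EuclideanSpace ℝ (Fin 3)) (hbc : b ≠ c) (y z : EuclideanSpace ℝ (Fin 3)) :
    ⟪z, fderiv ℝ (g c w) b y⟫ - ⟪y, fderiv ℝ (g c w) b z⟫ =
      (⟪y, w⟫ * ⟪b - c, z⟫ - ⟪z, w⟫ * ⟪b - c, y⟫) / ‖b - c‖ ^ 3 := by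
  have hu : b - c ≠ 0 := sub_ne_zero.2 hbc
  have hr : ‖b - c‖ ≠ 0 := norm_ne_zero_iff.2 hu
  have h1 : HasFDerivAt (fun x : EuclideanSpace ℝ (Fin 3) => x - c)
      (ContinuousLinearMap.id ℝ _) b := (hasFDerivAt_id b).sub_const c
  have h2 : HasFDerivAt (fun x : EuclideanSpace ℝ (Fin 3) => ⟪x - c, w⟫)
      ((innerSL ℝ w).comp (ContinuousLinearMap.id ℝ _)) b := by
    have := ((innerSL ℝ w).hasFDerivAt (x := b - c)).comp b h1
    refine this.congr_of_eventuallyEq (Filter.Eventually.of_forall fun x => ?_)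
    exact real_inner_comm w (x - c)
  have hn2 : HasFDerivAt (fun x : EuclideanSpace ℝ (Fin 3) => ‖x - c‖ ^ 2)
      (2 • (innerSL ℝ (b - c)).comp (ContinuousLinearMap.id ℝ _)) b := h1.norm_sq
  have hsq : HasDerivAt Real.sqrt (1 / (2 * Real.sqrt (‖b - c‖ ^ 2))) (‖b - c‖ ^ 2) :=
    Real.hasDerivAt_sqrt (by positivity)
  have hnorm : HasFDerivAt (fun x : EuclideanSpace ℝ (Fin 3) => ‖x - c‖)
      (‖b - c‖⁻¹ • (innerSL ℝ (b - c))) b := by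
    have hcomp := hsq.comp_hasFDerivAt b hn2
    have hfun : (Real.sqrt ∘ fun x : EuclideanSpace ℝ (Fin 3) => ‖x - c‖ ^ 2)
        = fun x : EuclideanSpace ℝ (Fin 3) => ‖x - c‖ := by
      funext x; simp [Function.comp, Real.sqrt_sq (norm_nonneg _)]
    rw [hfun] at hcomp
    refine hcomp.congr_fderiv ?_
    ext v
    simp [Real.sqrt_sq (norm_nonneg _)]
    field_simp
  have h3 : HasFDerivAt (fun x : EuclideanSpace ℝ (Fin 3) => ‖x - c‖ ^ 3)
      ((‖b - c‖ ^ 2) • (‖b - c‖⁻¹ • (innerSL ℝ (b - c)))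
        + ‖b - c‖ • (2 • (innerSL ℝ (b - c)).comp (ContinuousLinearMap.id ℝ _))) b := by
    have := hn2.mul hnorm
    have hfun : (fun x : EuclideanSpace ℝ (Fin 3) => ‖x - c‖ ^ 2 * ‖x - c‖)
        = fun x : EuclideanSpace ℝ (Fin 3) => ‖x - c‖ ^ 3 := by
      funext x; ring
    rw [← hfun]
    exact this
  have hinv : HasDerivAt Inv.inv (-((‖b - c‖ ^ 3) ^ 2)⁻¹) (‖b - c‖ ^ 3) :=
    hasDerivAt_inv (by positivity)
  have h4 : HasFDerivAt (fun x : EuclideanSpace ℝ (Fin 3) => (‖x - c‖ ^ 3)⁻¹)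
      ((-((‖b - c‖ ^ 3) ^ 2)⁻¹) • ((‖b - c‖ ^ 2) • (‖b - c‖⁻¹ • (innerSL ℝ (b - c)))
        + ‖b - c‖ • (2 • (innerSL ℝ (b - c)).comp (ContinuousLinearMap.id ℝ _)))) b :=
    hinv.comp_hasFDerivAt b h3
  have h5 := h2.mul h4
  have h6 : HasFDerivAt
      (fun x : EuclideanSpace ℝ (Fin 3) => (⟪x - c, w⟫ * (‖x - c‖ ^ 3)⁻¹) • (x - c))
      ((⟪b - c, w⟫ * (‖b - c‖ ^ 3)⁻¹) • ContinuousLinearMap.id ℝ (EuclideanSpace ℝ (Fin 3))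
        + (⟪b - c, w⟫ • ((-((‖b - c‖ ^ 3) ^ 2)⁻¹) • ((‖b - c‖ ^ 2) • (‖b - c‖⁻¹ • (innerSL ℝ (b - c)))
            + ‖b - c‖ • (2 • (innerSL ℝ (b - c)).comp (ContinuousLinearMap.id ℝ _))))
          + (‖b - c‖ ^ 3)⁻¹ • (innerSL ℝ w).comp (ContinuousLinearMap.id ℝ _)).smulRight (b - c)) b :=
    h5.smul h1
  have hgfun : g c w = fun x : EuclideanSpace ℝ (Fin 3) =>
      (⟪x - c, w⟫ * (‖x - c‖ ^ 3)⁻¹) • (x - c) := by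
    funext x; simp [g, div_eq_mul_inv]
  rw [hgfun, h6.fderiv]
  simp only [ContinuousLinearMap.add_apply, ContinuousLinearMap.smul_apply,
    ContinuousLinearMap.coe_smul', Pi.smul_apply, ContinuousLinearMap.smulRight_apply,
    ContinuousLinearMap.comp_apply, ContinuousLinearMap.coe_id', id_eq, innerSL_apply_apply,
    ContinuousLinearMap.neg_apply, smul_eq_mul, inner_add_right, real_inner_smul_right,
    two_smul]
  rw [real_inner_comm z y, real_inner_comm w y, real_inner_comm w z,
    real_inner_comm (b - c) y, real_inner_comm (b - c) z] at *
  have hr' : ‖b - c‖ ^ 3 ≠ 0 := pow_ne_zero _ hr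
  generalize (inner ℝ (b - c) w : ℝ) = A
  generalize (inner ℝ (b - c) y : ℝ) = B
  generalize (inner ℝ (b - c) z : ℝ) = C
  generalize (inner ℝ w y : ℝ) = D
  generalize (inner ℝ w z : ℝ) = E
  generalize (inner ℝ z y : ℝ) = F
  field_simp
  ring
end
end
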